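/- arXiv:2205.09668 — 8 statements merged into one kernel-verified Lean document; each statement's English description precedes it below -/
import Mathlib

section
/- Let V and V' be finite types, let P be a predicate on finite subsets of V and P' a predicate on finite subsets of V', each superset-closed, and assume the full vertex set V is a P-set. If φ is a graph isomorphism from the P-TAR graph to the P'-TAR graph, then every minimal P'-set is a subset of φ(V). -/
/-- The TAR (token addition/removal) graph of a predicate `P` on finite subsets of `V`:
vertices are the `P`-sets, two `P`-sets being adjacent iff their symmetric difference
has exactly one element. -/
def tarGraph {V : Type*} [DecidableEq V] (P : Finset V → Prop) :
    SimpleGraph {S : Finset V // P S} where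
  Adj S T := (symmDiff S.1 T.1).card = 1
  symm := ⟨by intro S T h; rwa [symmDiff_comm]⟩
  loopless := ⟨by intro S h; simp [symmDiff_self] at h⟩

/-- `S` is a minimal `P`-set: `S` is a `P`-set and no proper subset of `S` is a `P`-set. -/
def IsMinimalPSet {V : Type*} (P : Finset V → Prop) (S : Finset V) : Prop :=
  P S ∧ ∀ T : Finset V, T ⊂ S → ¬ P T

/-- `R` is `P`-irrelevant: no minimal `P`-set contains any vertex of `R`. -/
def IsIrrelevant {V : Type*} (P : Finset V → Prop) (R : Finset V) : Prop :=
  ∀ S : Finset V, IsMinimalPSet P S → ∀ v ∈ R, v ∉ S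

private lemma symmDiff_insert_of_not_mem {V : Type*} [DecidableEq V] {S : Finset V} {v : V}
    (h : v ∉ S) : symmDiff S (insert v S) = {v} := by
  ext x
  by_cases hx : x = v
  · subst hx; simp [Finset.mem_symmDiff, h]
  · simp [Finset.mem_symmDiff, hx]

private lemma tar_adj_insert {V : Type*} [DecidableEq V] {P : Finset V → Prop}
    {S T : {S : Finset V // P S}} {v : V} (hv : v ∉ S.1) (hT : T.1 = insert v S.1) :
    (tarGraph P).Adj S T := by
  show (symmDiff S.1 T.1).card = 1
  rw [hT, symmDiff_insert_of_not_mem hv]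
  simp

/-- up-walks: if `P` is superset closed, we can walk from `S` up to any `P`-superset. -/
private lemma tar_walk_up {V : Type*} [DecidableEq V] {P : Finset V → Prop}
    (hP : ∀ S T : Finset V, P S → S ⊆ T → P T) :
    ∀ (k : ℕ) (S T : {S : Finset V // P S}), S.1 ⊆ T.1 → (T.1 \ S.1).card = k →
      ∃ p : (tarGraph P).Walk S T, p.length = k := by
  intro k
  induction k with
  | zero =>
    intro S T hsub hcard
    rw [Finset.card_eq_zero, Finset.sdiff_eq_empty_iff_subset] at hcard
    have : S = T := Subtype.ext (Finset.Subset.antisymm hsub hcard)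
    subst this
    exact ⟨SimpleGraph.Walk.nil, rfl⟩
  | succ k ih =>
    intro S T hsub hcard
    have hne : (T.1 \ S.1).Nonempty := by rw [← Finset.card_pos, hcard]; omega
    obtain ⟨v, hv⟩ := hne
    have hvT : v ∈ T.1 := (Finset.mem_sdiff.mp hv).1
    have hvS : v ∉ S.1 := (Finset.mem_sdiff.mp hv).2
    set S2 : {S : Finset V // P S} :=
      ⟨insert v S.1, hP _ _ S.2 (Finset.subset_insert _ _)⟩ with hS2
    have hadj : (tarGraph P).Adj S S2 := tar_adj_insert hvS rfl
    have hsub2 : S2.1 ⊆ T.1 := Finset.insert_subset hvT hsub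
    have hcard2 : (T.1 \ S2.1).card = k := by
      show (T.1 \ insert v S.1).card = k
      rw [Finset.sdiff_insert, Finset.card_erase_of_mem hv, hcard]
      omega
    obtain ⟨p, hp⟩ := ih S2 T hsub2 hcard2
    exact ⟨SimpleGraph.Walk.cons hadj p, by simp [hp]⟩

/-- Hamming lower bound on walk lengths in a TAR graph. -/
private lemma tar_walk_le {V : Type*} [DecidableEq V] {P : Finset V → Prop}
    {S T : {S : Finset V // P S}} (p : (tarGraph P).Walk S T) :
    (symmDiff S.1 T.1).card ≤ p.length := by
  induction p with
  | nil => simp [symmDiff_self]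
  | @cons u v w h p ih =>
    have tri : symmDiff u.1 w.1 ⊆ symmDiff u.1 v.1 ∪ symmDiff v.1 w.1 :=
      Finset.le_iff_subset.mp (symmDiff_triangle _ _ _)
    have h1 : (symmDiff u.1 v.1).card = 1 := h
    calc (symmDiff u.1 w.1).card ≤ (symmDiff u.1 v.1 ∪ symmDiff v.1 w.1).card :=
          Finset.card_le_card tri
      _ ≤ (symmDiff u.1 v.1).card + (symmDiff v.1 w.1).card := Finset.card_union_le _ _
      _ ≤ 1 + p.length := by rw [h1]; omega
      _ = (SimpleGraph.Walk.cons h p).length := by simp [Nat.add_comm]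

private lemma iso_dist_le {V W : Type*} {G : SimpleGraph V} {H : SimpleGraph W}
    (φ : G ≃g H) (u v : V) : H.dist (φ u) (φ v) ≤ G.dist u v := by
  by_cases h : G.Reachable u v
  · obtain ⟨p, hp⟩ := h.exists_walk_length_eq_dist
    calc H.dist (φ u) (φ v) ≤ (p.map φ.toHom).length := SimpleGraph.dist_le _
      _ = G.dist u v := by rw [SimpleGraph.Walk.length_map, hp]
  · have h' : ¬ H.Reachable (φ u) (φ v) := by
      intro hr
      exact h (by simpa using hr.map φ.symm.toHom)
    simp [SimpleGraph.dist_eq_zero_of_not_reachable h']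

private lemma iso_dist_eq {V W : Type*} {G : SimpleGraph V} {H : SimpleGraph W}
    (φ : G ≃g H) (u v : V) : H.dist (φ u) (φ v) = G.dist u v := by
  refine le_antisymm (iso_dist_le φ u v) ?_
  have := iso_dist_le φ.symm (φ u) (φ v)
  simpa using this

private lemma card_symmDiff_eq {V : Type*} [DecidableEq V] (S T : Finset V) :
    (symmDiff S T).card = (S \ T).card + (T \ S).card := by
  have h : symmDiff S T = (S \ T) ∪ (T \ S) := by
    ext x; simp [Finset.mem_symmDiff]
  rw [h, Finset.card_union_of_disjoint disjoint_sdiff_sdiff]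

private lemma symmDiff_card_one {V : Type*} [DecidableEq V] {S T : Finset V}
    (h : (symmDiff S T).card = 1) :
    (∃ x, x ∉ S ∧ T = insert x S) ∨ (∃ x, x ∈ S ∧ T = S.erase x) := by
  obtain ⟨x, hx⟩ := Finset.card_eq_one.mp h
  have hmem : ∀ y, y ≠ x → (y ∈ S ↔ y ∈ T) := by
    intro y hy
    have : y ∉ symmDiff S T := by rw [hx]; simp [hy]
    simp only [Finset.mem_symmDiff] at this
    tauto
  have hxmem : x ∈ symmDiff S T := by rw [hx]; simp
  rw [Finset.mem_symmDiff] at hxmem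
  rcases hxmem with ⟨hxS, hxT⟩ | ⟨hxT, hxS⟩
  · right
    refine ⟨x, hxS, ?_⟩
    ext y
    by_cases hy : y = x
    · subst hy; simp [hxT]
    · simp [Finset.mem_erase, hy, (hmem y hy).symm]
  · left
    refine ⟨x, hxS, ?_⟩
    ext y
    by_cases hy : y = x
    · subst hy; simp [hxT]
    · simp [Finset.mem_insert, hy, (hmem y hy).symm]

private lemma symmDiff_insert_right {V : Type*} [DecidableEq V] {S T : Finset V} {x : V}
    (hxS : x ∉ S) (hxT : x ∉ T) :
    symmDiff S (insert x T) = insert x (symmDiff S T) := by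
  ext y
  by_cases hy : y = x
  · subst hy; simp [Finset.mem_symmDiff, hxS, hxT]
  · simp [Finset.mem_symmDiff, hy]

/-- If `P` and `P'` are superset-closed, the full vertex set is a `P`-set, and `φ` is an
isomorphism from the `P`-TAR graph to the `P'`-TAR graph, then every minimal `P'`-set is
contained in `φ(V)`. -/
theorem minimal_subset_image_univ_of_iso {V V' : Type*}
    [Fintype V] [DecidableEq V] [Fintype V'] [DecidableEq V']
    (P : Finset V → Prop) (P' : Finset V' → Prop)
    (hP : ∀ S T : Finset V, P S → S ⊆ T → P T)
    (hP' : ∀ S T : Finset V', P' S → S ⊆ T → P' T)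
    (huniv : P Finset.univ)
    (φ : tarGraph P ≃g tarGraph P')
    (Y' : Finset V') (hY' : IsMinimalPSet P' Y') :
    Y' ⊆ (φ ⟨Finset.univ, huniv⟩).1 := by
  classical
  set n := Fintype.card V with hn
  set Tv : {S : Finset V // P S} := ⟨Finset.univ, huniv⟩ with hTv
  have hPY : P' Y' := hY'.1
  set Yv : {S : Finset V' // P' S} := ⟨Y', hPY⟩ with hYv
  set U' : Finset V' := (φ Tv).1 with hU'
  have hPU' : P' U' := (φ Tv).2
  set A : {S : Finset V // P S} := φ.symm Yv with hA
  have hφA : φ A = Yv := φ.apply_symm_apply Yv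
  -- distance from the top vertex in the P-TAR graph
  have hAcard : ∀ S : {S : Finset V // P S}, S.1.card ≤ n := fun S => Finset.card_le_univ _
  have distT : ∀ S : {S : Finset V // P S},
      (tarGraph P).dist Tv S = n - S.1.card := by
    intro S
    have hsub : S.1 ⊆ Tv.1 := Finset.subset_univ _
    have hcard : (Tv.1 \ S.1).card = n - S.1.card := by
      rw [Finset.card_sdiff_of_subset hsub]
      simp [hTv, hn]
    obtain ⟨p, hp⟩ := tar_walk_up hP _ S Tv hsub hcard
    refine le_antisymm ?_ ?_
    · calc (tarGraph P).dist Tv S ≤ p.reverse.length := SimpleGraph.dist_le _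
        _ = n - S.1.card := by rw [SimpleGraph.Walk.length_reverse, hp]
    · have hreach : (tarGraph P).Reachable Tv S := ⟨p.reverse⟩
      obtain ⟨q, hq⟩ := hreach.exists_walk_length_eq_dist
      have := tar_walk_le q
      rw [hq] at this
      have hsd : symmDiff Tv.1 S.1 = Tv.1 \ S.1 := by
        ext x; simp [Finset.mem_symmDiff, hTv]
      rwa [hsd, hcard] at this
  -- distances from φ Tv in the P'-TAR graph
  have dist' : ∀ T' : {S : Finset V' // P' S},
      (tarGraph P').dist (φ Tv) T' = n - (φ.symm T').1.card := by
    intro T'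
    have h := iso_dist_eq φ Tv (φ.symm T')
    rw [show φ (φ.symm T') = T' from φ.apply_symm_apply T'] at h
    rw [h, distT]
  set d : ℕ := (tarGraph P').dist (φ Tv) Yv with hd
  have hdA : d = n - A.1.card := by rw [hd, dist']
  -- d = |U' Δ Y'|
  have hUY : P' (U' ∪ Y') := hP' _ _ hPU' Finset.subset_union_left
  set UYv : {S : Finset V' // P' S} := ⟨U' ∪ Y', hUY⟩ with hUYv
  obtain ⟨w1, hw1⟩ := tar_walk_up hP' _ (φ Tv) UYv Finset.subset_union_left rfl
  obtain ⟨w2, hw2⟩ := tar_walk_up hP' _ Yv UYv Finset.subset_union_right rfl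
  have hdle : d ≤ (symmDiff U' Y').card := by
    have : d ≤ (w1.append w2.reverse).length := SimpleGraph.dist_le _
    rw [SimpleGraph.Walk.length_append, SimpleGraph.Walk.length_reverse, hw1, hw2] at this
    have e1 : (UYv.1 \ (φ Tv).1) = Y' \ U' := by
      show (U' ∪ Y') \ U' = Y' \ U'
      rw [Finset.union_sdiff_left]
    have e2 : (UYv.1 \ Yv.1) = U' \ Y' := by
      show (U' ∪ Y') \ Y' = U' \ Y'
      rw [Finset.union_sdiff_right]
    rw [e1, e2] at this
    rw [card_symmDiff_eq]
    omega
  have hdge : (symmDiff U' Y').card ≤ d := by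
    have hreach : (tarGraph P').Reachable (φ Tv) Yv := ⟨w1.append w2.reverse⟩
    obtain ⟨q, hq⟩ := hreach.exists_walk_length_eq_dist
    have := tar_walk_le q
    rw [hq] at this
    exact this
  have hdeq : d = (symmDiff U' Y').card := le_antisymm hdle hdge
  -- main argument: by contradiction
  intro v hv
  by_contra hvU
  have hd1 : 1 ≤ (Y' \ U').card := Finset.card_pos.mpr ⟨v, Finset.mem_sdiff.mpr ⟨hv, hvU⟩⟩
  -- adding a token to A
  set B : V → {S : Finset V // P S} :=
    fun w => ⟨insert w A.1, hP _ _ A.2 (Finset.subset_insert _ _)⟩ with hB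
  have hdpos : A.1.card < n := by
    -- since Y' \ U' nonempty, d ≥ 1... show A ≠ univ via d ≥ 1
    have : 1 ≤ d := by rw [hdeq, card_symmDiff_eq]; omega
    have := hAcard A
    omega
  have key : ∀ w : V, ∃ x : V', w ∉ A.1 →
      x ∈ U' \ Y' ∧ (φ (B w)).1 = insert x Y' := by
    intro w
    by_cases hw : w ∈ A.1
    · exact ⟨v, fun h => absurd hw h⟩
    · have hBadj : (tarGraph P).Adj A (B w) := tar_adj_insert hw rfl
      have hadj' : (tarGraph P').Adj Yv (φ (B w)) := by
        rw [← hφA]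
        exact φ.map_adj_iff.mpr hBadj
      have hadjcard : (symmDiff Y' (φ (B w)).1).card = 1 := hadj'
      -- distance of φ (B w) from φ Tv
      have hdistBw : (tarGraph P').dist (φ Tv) (φ (B w)) = n - (A.1.card + 1) := by
        rw [iso_dist_eq φ Tv (B w), distT]
        congr 1
        exact Finset.card_insert_of_notMem hw
      rcases symmDiff_card_one hadjcard with ⟨x, hxY, hxeq⟩ | ⟨x, hxY, hxeq⟩
      · -- φ (B w) = insert x Y'
        refine ⟨x, fun _ => ⟨?_, hxeq⟩⟩
        rw [Finset.mem_sdiff]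
        refine ⟨?_, hxY⟩
        by_contra hxU
        -- Hamming lower bound contradicts distance
        obtain ⟨pw, hpw⟩ := tar_walk_up hP _ (B w) Tv (Finset.subset_univ _) rfl
        have hreach : (tarGraph P').Reachable (φ Tv) (φ (B w)) :=
          ⟨(pw.reverse).map φ.toHom⟩
        obtain ⟨q, hq⟩ := hreach.exists_walk_length_eq_dist
        have hle := tar_walk_le q
        rw [hq, hdistBw] at hle
        have hsd : symmDiff (φ Tv).1 (φ (B w)).1 = insert x (symmDiff U' Y') := by
          rw [hxeq, ← hU']
          exact symmDiff_insert_right hxU hxY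
        rw [hsd] at hle
        have hxnot : x ∉ symmDiff U' Y' := by
          simp [Finset.mem_symmDiff, hxU, hxY]
        rw [Finset.card_insert_of_notMem hxnot] at hle
        omega
      · -- removal: contradicts minimality of Y'
        exfalso
        have hsubY : (φ (B w)).1 ⊂ Y' := by
          rw [hxeq]
          exact Finset.erase_ssubset hxY
        exact hY'.2 _ hsubY (φ (B w)).2
  choose f hf using key
  have hcard : (Finset.univ \ A.1).card ≤ (U' \ Y').card := by
    apply Finset.card_le_card_of_injOn f
    · intro w hw
      exact (hf w (Finset.mem_sdiff.mp hw).2).1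
    · intro w1 hw1 w2 hw2 hfeq
      simp only [Finset.coe_sdiff, Set.mem_diff, Finset.coe_univ, Finset.mem_coe] at hw1 hw2
      have h1 := (hf w1 hw1.2).2
      have h2 := (hf w2 hw2.2).2
      have : φ (B w1) = φ (B w2) := Subtype.ext (by rw [h1, h2, hfeq])
      have hBeq : B w1 = B w2 := φ.injective this
      have : insert w1 A.1 = insert w2 A.1 := congrArg Subtype.val hBeq
      have hmem : w1 ∈ insert w2 A.1 := by rw [← this]; exact Finset.mem_insert_self _ _
      rcases Finset.mem_insert.mp hmem with h | h
      · exact h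
      · exact absurd h hw1.2
  have hcardA : (Finset.univ \ A.1).card = n - A.1.card := by
    rw [Finset.card_sdiff_of_subset (Finset.subset_univ _), Finset.card_univ]
  rw [hcardA, ← hdA, hdeq, card_symmDiff_eq] at hcard
  omega
end

section
/- Let V and V' be finite nonempty types and let P and P' be X-set properties on finite subsets of V and V' respectively, and suppose φ is a graph isomorphism from the P-TAR graph to the P'-TAR graph. Then |φ(S)| = |S| for every P-set S if and only if there exists a bijection ψ : V → V' such that φ(S) = ψ(S) (the image of S under ψ) for every P-set S of V. -/
open Finset

private lemma symmDiff_card_one_subset_aux {V : Type*} [DecidableEq V] {A B : Finset V}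
    (h : (symmDiff A B).card = 1) (hc : A.card < B.card) : A ⊆ B := by
  have hd : Disjoint (A \ B) (B \ A) := disjoint_sdiff_sdiff
  have hs : symmDiff A B = (A \ B) ∪ (B \ A) := by
    rw [symmDiff_def]; rfl
  rw [hs, Finset.card_union_of_disjoint hd] at h
  have h0 : (A \ B).card = 0 := by
    by_contra h0
    have h1 : (B \ A).card = 0 := by omega
    have : B ⊆ A := sdiff_eq_empty_iff_subset.1 (Finset.card_eq_zero.1 h1)
    have := Finset.card_le_card this
    omega
  exact sdiff_eq_empty_iff_subset.1 (Finset.card_eq_zero.1 h0)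

private lemma symmDiff_insert_card_aux {V : Type*} [DecidableEq V] {A : Finset V} {v : V}
    (h : v ∉ A) : (symmDiff A (insert v A)).card = 1 := by
  rw [symmDiff_def]
  show ((A \ insert v A) ∪ (insert v A \ A)).card = 1
  rw [Finset.sdiff_eq_empty_iff_subset.2 (Finset.subset_insert _ _),
    Finset.insert_sdiff_of_notMem _ h, Finset.sdiff_self]
  simp

/-- Let `P`, `P'` be X-set properties and `φ` an isomorphism from the `P`-TAR graph to
the `P'`-TAR graph. Then `|φ(S)| = |S|` for every `P`-set `S` iff there is a bijection
`ψ : V → V'` with `φ(S) = ψ(S)` for every `P`-set `S`. -/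
theorem card_preserving_iff_induced_by_bijection {V V' : Type*}
    [Fintype V] [DecidableEq V] [Nonempty V]
    [Fintype V'] [DecidableEq V'] [Nonempty V']
    (P : Finset V → Prop) (P' : Finset V' → Prop)
    (hP1 : ∀ S T : Finset V, P S → S ⊆ T → P T)
    (hP2 : ¬ P ∅)
    (hP3 : ∀ v : V, P (Finset.univ \ {v}))
    (hP'1 : ∀ S T : Finset V', P' S → S ⊆ T → P' T)
    (hP'2 : ¬ P' ∅)
    (hP'3 : ∀ v : V', P' (Finset.univ \ {v}))
    (φ : tarGraph P ≃g tarGraph P') :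
    (∀ S : {S : Finset V // P S}, (φ S).1.card = S.1.card)
      ↔ ∃ ψ : V ≃ V', ∀ S : {S : Finset V // P S}, (φ S).1 = S.1.image ψ := by
  constructor
  · intro hcard
    classical
    have hPuniv : P univ := hP1 _ _ (hP3 (Classical.arbitrary V)) (subset_univ _)
    have hP'univ : P' univ := hP'1 _ _ (hP'3 (Classical.arbitrary V')) (subset_univ _)
    have hinv : ∀ T : {S : Finset V' // P' S}, (φ.symm T).1.card = T.1.card := by
      intro T
      have h := hcard (φ.symm T)
      rw [RelIso.apply_symm_apply] at h
      exact h.symm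
    have hVV' : Fintype.card V = Fintype.card V' := by
      have h1 := hcard ⟨univ, hPuniv⟩
      have h2 := hinv ⟨univ, hP'univ⟩
      have l1 : ((φ ⟨univ, hPuniv⟩).1).card ≤ Fintype.card V' := Finset.card_le_univ _
      have l2 : ((φ.symm ⟨univ, hP'univ⟩).1).card ≤ Fintype.card V := Finset.card_le_univ _
      simp only [Finset.card_univ] at h1 h2
      omega
    have hφuniv : (φ ⟨univ, hPuniv⟩).1 = univ := by
      apply Finset.eq_univ_of_card
      rw [hcard]
      simp [Finset.card_univ, hVV']
    have hpos : 0 < Fintype.card V' := Fintype.card_pos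
    have hkey : ∀ v : V, ∃ w : V', (univ \ (φ ⟨univ \ {v}, hP3 v⟩).1) = {w} := by
      intro v
      apply Finset.card_eq_one.1
      rw [Finset.card_sdiff_of_subset (subset_univ _), hcard,
        Finset.card_sdiff_of_subset (by simp : ({v} : Finset V) ⊆ univ)]
      simp only [Finset.card_univ, Finset.card_singleton, hVV']
      omega
    choose ψ0 hψ0 using hkey
    have hφv : ∀ v : V, (φ ⟨univ \ {v}, hP3 v⟩).1 = univ \ {ψ0 v} := by
      intro v
      rw [← hψ0 v, Finset.sdiff_sdiff_eq_self (subset_univ _)]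
    have hinj : Function.Injective ψ0 := by
      intro a b hab
      have heq : (φ ⟨univ \ {a}, hP3 a⟩) = (φ ⟨univ \ {b}, hP3 b⟩) := by
        apply Subtype.ext; rw [hφv, hφv, hab]
      have h2 : (univ \ {a} : Finset V) = univ \ {b} :=
        congrArg Subtype.val (EquivLike.injective φ heq)
      by_contra hne
      have hmem : a ∈ (univ \ {b} : Finset V) := by simp [hne]
      rw [← h2] at hmem
      simp at hmem
    have hbij : Function.Bijective ψ0 :=
      (Fintype.bijective_iff_injective_and_card ψ0).2 ⟨hinj, hVV'⟩
    have main : ∀ k : ℕ, ∀ S : {S : Finset V // P S},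
        (univ \ S.1).card = k → (φ S).1 = S.1.image ψ0 := by
      intro k
      induction k using Nat.strong_induction_on with
      | _ k IH =>
        intro S hk
        rcases Nat.lt_or_ge k 2 with hk2 | hk2
        · interval_cases k
          · -- S = univ
            have hS : S.1 = univ :=
              univ_subset_iff.1 (sdiff_eq_empty_iff_subset.1 (Finset.card_eq_zero.1 hk))
            have hSe : S = ⟨univ, hPuniv⟩ := Subtype.ext hS
            rw [hSe, hφuniv]
            exact (Finset.image_univ_of_surjective hbij.surjective).symm
          · -- S = univ \ {v}
            obtain ⟨v, hv⟩ := Finset.card_eq_one.1 hk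
            have hS : S.1 = univ \ {v} := by
              rw [← Finset.sdiff_sdiff_eq_self (subset_univ S.1), hv]
            have hSe : S = ⟨univ \ {v}, hP3 v⟩ := Subtype.ext hS
            rw [hSe, hφv]
            show (univ \ {ψ0 v} : Finset V') = (univ \ {v}).image ψ0
            rw [Finset.image_sdiff _ _ hinj, Finset.image_univ_of_surjective hbij.surjective,
              Finset.image_singleton]
        · -- two elements outside S
          have h2 : 1 < (univ \ S.1).card := by omega
          obtain ⟨v1, hv1, v2, hv2, hne⟩ := Finset.one_lt_card.1 h2
          have hv1' : v1 ∉ S.1 := (Finset.mem_sdiff.1 hv1).2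
          have hv2' : v2 ∉ S.1 := (Finset.mem_sdiff.1 hv2).2
          have hcompl : ∀ v : V, v ∈ univ \ S.1 →
              (univ \ (insert v S.1)).card = k - 1 := by
            intro v hv
            rw [Finset.sdiff_insert, Finset.card_erase_of_mem hv, hk]
          have hstep : ∀ (v : V) (hv : v ∉ S.1),
              (φ S).1 ⊆ (φ ⟨insert v S.1, hP1 _ _ S.2 (Finset.subset_insert _ _)⟩).1 := by
            intro v hv
            set T : {S : Finset V // P S} :=
              ⟨insert v S.1, hP1 _ _ S.2 (Finset.subset_insert _ _)⟩ with hT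
            have hadj : (tarGraph P).Adj S T := symmDiff_insert_card_aux hv
            have hadj' : (tarGraph P').Adj (φ S) (φ T) := φ.map_adj_iff.2 hadj
            have hlt : (φ S).1.card < (φ T).1.card := by
              rw [hcard, hcard]
              show S.1.card < (insert v S.1).card
              rw [Finset.card_insert_of_notMem hv]
              omega
            exact symmDiff_card_one_subset_aux hadj' hlt
          have hIH : ∀ (v : V) (hv : v ∈ univ \ S.1),
              (φ ⟨insert v S.1, hP1 _ _ S.2 (Finset.subset_insert _ _)⟩).1
                = (insert v S.1).image ψ0 :=
            fun v hv => IH (k - 1) (by omega) _ (hcompl v hv)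
          have hsub : (φ S).1 ⊆ S.1.image ψ0 := by
            have hs1 := hstep v1 hv1'
            have hs2 := hstep v2 hv2'
            rw [hIH v1 hv1] at hs1
            rw [hIH v2 hv2] at hs2
            have hint : insert v1 S.1 ∩ insert v2 S.1 = S.1 := by
              ext x
              simp only [Finset.mem_inter, Finset.mem_insert]
              constructor
              · rintro ⟨h1 | h1, h2 | h2⟩ <;> try assumption
                exact absurd (h1 ▸ h2 ▸ rfl) hne
              · intro hx; exact ⟨Or.inr hx, Or.inr hx⟩
            intro x hx
            have : x ∈ (insert v1 S.1).image ψ0 ∩ (insert v2 S.1).image ψ0 :=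
              Finset.mem_inter.2 ⟨hs1 hx, hs2 hx⟩
            rw [← Finset.image_inter _ _ hinj, hint] at this
            exact this
          apply Finset.eq_of_subset_of_card_le hsub
          rw [Finset.card_image_of_injective _ hinj, hcard]
    refine ⟨Equiv.ofBijective ψ0 hbij, fun S => ?_⟩
    exact main _ S rfl
  · rintro ⟨ψ, hψ⟩ S
    rw [hψ S, Finset.card_image_of_injective _ ψ.injective]
end

section
/- Let V and V' be finite nonempty types and let P and P' be X-set properties on finite subsets of V and V' respectively. Suppose φ is a graph isomorphism from the P-TAR graph to the P'-TAR graph such that |φ(S)| = |S| for every P-set S. Then φ maps minimal P-sets to minimal P'-sets of the same size: if S is a minimal P-set of V, then φ(S) is a minimal P'-set of V'. -/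
/-- Let `P`, `P'` be X-set properties and `φ` an isomorphism from the `P`-TAR graph to
the `P'`-TAR graph with `|φ(S)| = |S|` for every `P`-set `S`. Then `φ` maps minimal
`P`-sets to minimal `P'`-sets of the same size. -/
theorem iso_maps_minimal_to_minimal {V V' : Type*}
    [Fintype V] [DecidableEq V] [Nonempty V]
    [Fintype V'] [DecidableEq V'] [Nonempty V']
    (P : Finset V → Prop) (P' : Finset V' → Prop)
    (hP1 : ∀ S T : Finset V, P S → S ⊆ T → P T)
    (hP2 : ¬ P ∅)
    (hP3 : ∀ v : V, P (Finset.univ \ {v}))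
    (hP'1 : ∀ S T : Finset V', P' S → S ⊆ T → P' T)
    (hP'2 : ¬ P' ∅)
    (hP'3 : ∀ v : V', P' (Finset.univ \ {v}))
    (φ : tarGraph P ≃g tarGraph P')
    (hcard : ∀ S : {S : Finset V // P S}, (φ S).1.card = S.1.card)
    (S : {S : Finset V // P S}) (hS : IsMinimalPSet P S.1) :
    IsMinimalPSet P' (φ S).1 ∧ (φ S).1.card = S.1.card := by
  refine ⟨⟨(φ S).2, ?_⟩, hcard S⟩
  intro T hT hPT
  obtain ⟨v, hvmem, hvT⟩ := Finset.exists_of_ssubset hT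
  have hPT' : P' ((φ S).1 \ {v}) := by
    refine hP'1 T _ hPT ?_
    intro x hx
    simp only [Finset.mem_sdiff, Finset.mem_singleton]
    exact ⟨hT.1 hx, fun h => hvT (h ▸ hx)⟩
  set T' : {S : Finset V' // P' S} := ⟨(φ S).1 \ {v}, hPT'⟩ with hT'
  have hadj : (tarGraph P').Adj (φ S) T' := by
    show (symmDiff (φ S).1 ((φ S).1 \ {v})).card = 1
    rw [symmDiff_def]
    have h1 : (φ S).1 \ ((φ S).1 \ {v}) = {v} := by
      rw [Finset.sdiff_sdiff_self_left, Finset.inter_singleton_of_mem hvmem]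
    have h2 : ((φ S).1 \ {v}) \ (φ S).1 = ∅ :=
      Finset.sdiff_eq_empty_iff_subset.2 Finset.sdiff_subset
    rw [Finset.sup_eq_union, h1, h2, Finset.union_empty, Finset.card_singleton]
  set U : {S : Finset V // P S} := φ.symm T' with hU
  have hadjSU : (tarGraph P).Adj S U := by
    have := φ.symm.map_adj_iff.2 hadj
    simpa [hU] using this
  have hUcard : U.1.card = T'.1.card := by
    have h := hcard U
    rw [hU, RelIso.apply_symm_apply] at h
    exact h.symm
  have hTlt : T'.1.card < (φ S).1.card := by
    have : ((φ S).1 \ {v}).card < (φ S).1.card :=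
      Finset.card_lt_card (Finset.sdiff_ssubset (by simpa using hvmem) (by simp))
    simpa [hT'] using this
  have hUlt : U.1.card < S.1.card := by
    rw [hUcard]
    calc T'.1.card < (φ S).1.card := hTlt
    _ = S.1.card := hcard S
  have hsd : (S.1 \ U.1).card + (U.1 \ S.1).card = 1 := by
    have hd : Disjoint (S.1 \ U.1) (U.1 \ S.1) := disjoint_sdiff_sdiff
    have := hadjSU
    rw [show (tarGraph P).Adj S U ↔ (symmDiff S.1 U.1).card = 1 from Iff.rfl,
      symmDiff_def, Finset.sup_eq_union, Finset.card_union_of_disjoint hd] at this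
    exact this
  have hUS : U.1 \ S.1 = ∅ := by
    by_contra hne
    have h1 : 1 ≤ (U.1 \ S.1).card := Finset.card_pos.2 (Finset.nonempty_iff_ne_empty.2 hne)
    have hUdec : U.1.card = (U.1 ∩ S.1).card + (U.1 \ S.1).card :=
      (Finset.card_inter_add_card_sdiff U.1 S.1).symm
    have hSdec : S.1.card = (S.1 ∩ U.1).card + (S.1 \ U.1).card :=
      (Finset.card_inter_add_card_sdiff S.1 U.1).symm
    have hSU0 : (S.1 \ U.1).card = 0 := by omega
    have : (U.1 \ S.1).card = 1 := by omega
    rw [Finset.inter_comm] at hSdec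
    omega
  have hsub : U.1 ⊆ S.1 := Finset.sdiff_eq_empty_iff_subset.1 hUS
  have hne : U.1 ≠ S.1 := fun h => by rw [h] at hUlt; omega
  exact hS.2 U.1 (Finset.ssubset_iff_subset_ne.2 ⟨hsub, hne⟩) U.2
end

section
/- Let V₁ and V₂ be finite types, let P₁ and P₂ be predicates on finite subsets of V₁ and V₂ respectively, and define the predicate P on finite subsets of the disjoint union V₁ ⊕ V₂ by: S is a P-set if and only if the part of S lying in V₁ is a P₁-set and the part of S lying in V₂ is a P₂-set. Then the P-TAR graph is isomorphic to the Cartesian (box) product of the P₁-TAR graph and the P₂-TAR graph. -/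
lemma toLeft_symmDiff {V₁ V₂ : Type*} [DecidableEq V₁] [DecidableEq V₂]
    (u v : Finset (V₁ ⊕ V₂)) : (symmDiff u v).toLeft = symmDiff u.toLeft v.toLeft := by
  ext x; simp [symmDiff_def]

lemma toRight_symmDiff {V₁ V₂ : Type*} [DecidableEq V₁] [DecidableEq V₂]
    (u v : Finset (V₁ ⊕ V₂)) : (symmDiff u v).toRight = symmDiff u.toRight v.toRight := by
  ext x; simp [symmDiff_def]

/-- If `P` on finite subsets of `V₁ ⊕ V₂` is defined by "the part in `V₁` is a `P₁`-set
and the part in `V₂` is a `P₂`-set", then the `P`-TAR graph is isomorphic to the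
Cartesian (box) product of the `P₁`-TAR graph and the `P₂`-TAR graph. -/
theorem tar_disjoint_union_boxProd {V₁ V₂ : Type*}
    [Fintype V₁] [DecidableEq V₁] [Fintype V₂] [DecidableEq V₂]
    (P₁ : Finset V₁ → Prop) (P₂ : Finset V₂ → Prop) :
    Nonempty
      (tarGraph (fun S : Finset (V₁ ⊕ V₂) => P₁ S.toLeft ∧ P₂ S.toRight)
        ≃g (tarGraph P₁ □ tarGraph P₂)) := by
  refine ⟨⟨⟨fun S => (⟨S.1.toLeft, S.2.1⟩, ⟨S.1.toRight, S.2.2⟩),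
    fun p => ⟨p.1.1.disjSum p.2.1, by simp [p.1.2, p.2.2]⟩, ?_, ?_⟩, ?_⟩⟩
  · intro S; ext x; simp [Finset.toLeft_disjSum_toRight]
  · intro p
    ext <;> simp
  · rintro ⟨S, hS⟩ ⟨T, hT⟩
    show _ ↔ (symmDiff S T).card = 1
    rw [← Finset.card_toLeft_add_card_toRight, toLeft_symmDiff, toRight_symmDiff]
    constructor
    · rintro (⟨h1, he⟩ | ⟨h1, he⟩)
      · have : S.toRight = T.toRight := congrArg Subtype.val he
        have h1' : (symmDiff S.toLeft T.toLeft).card = 1 := h1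
        simp [this, h1']
      · have : S.toLeft = T.toLeft := congrArg Subtype.val he
        have h1' : (symmDiff S.toRight T.toRight).card = 1 := h1
        simp [this, h1']
    · intro h
      rcases Nat.add_eq_one_iff.mp h with ⟨h0, h1⟩ | ⟨h1, h0⟩
      · exact Or.inr ⟨h1, Subtype.ext (by simpa [symmDiff_eq_bot, Finset.card_eq_zero,
          ← Finset.bot_eq_empty] using h0)⟩
      · exact Or.inl ⟨h1, Subtype.ext (by simpa [symmDiff_eq_bot, Finset.card_eq_zero,
          ← Finset.bot_eq_empty] using h0)⟩
end

section
/- For every integer r ≥ 2, the zero forcing TAR graph of the star K_{1,r} is isomorphic to the Cartesian (box) product K_{1,r} □ K₂. -/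
/-- A set `B` is forcing-closed in `G` if no vertex of `B` has exactly one neighbor
outside `B` (i.e. no force can be performed from `B`). The zero forcing closure of `S`
is the smallest forcing-closed set containing `S`. -/
def ZFClosed {V : Type*} (G : SimpleGraph V) (B : Finset V) : Prop :=
  ∀ v ∈ B, ¬ ∃! w : V, G.Adj v w ∧ w ∉ B

/-- `S` is a zero forcing set of `G`: the zero forcing closure of `S` is all of `V`,
equivalently every forcing-closed set containing `S` is all of `V`. -/
def IsZeroForcingSet {V : Type*} [Fintype V] (G : SimpleGraph V) (S : Finset V) : Prop :=
  ∀ B : Finset V, S ⊆ B → ZFClosed G B → B = Finset.univ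

namespace ZTarStarAux

abbrev Vtx (r : ℕ) := Fin 1 ⊕ Fin r

variable {r : ℕ}

def Cset (r : ℕ) (b : Fin 2) : Finset (Vtx r) := if b = 0 then {Sum.inl 0} else ∅

def Dset (a : Vtx r) : Finset (Vtx r) :=
  Sum.elim (fun _ => (∅ : Finset (Vtx r))) (fun i => {Sum.inr i}) a

def eSet (a : Vtx r) (b : Fin 2) : Finset (Vtx r) := Cset r b ∪ Dset a

lemma inl_not_mem_Dset (a : Vtx r) (x : Fin 1) : (Sum.inl x : Vtx r) ∉ Dset a := by
  rcases a with y | i <;> simp [Dset]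

lemma inr_not_mem_Cset (b : Fin 2) (j : Fin r) : (Sum.inr j : Vtx r) ∉ Cset r b := by
  by_cases hb : b = 0 <;> simp [Cset, hb]

lemma mem_eSet_inl (a : Vtx r) (b : Fin 2) (x : Fin 1) :
    (Sum.inl x : Vtx r) ∈ eSet a b ↔ b = 0 := by
  have hx : x = 0 := Subsingleton.elim _ _
  subst hx
  by_cases hb : b = 0 <;> simp [eSet, Cset, hb, inl_not_mem_Dset]

lemma mem_eSet_inr (a : Vtx r) (b : Fin 2) (j : Fin r) :
    (Sum.inr j : Vtx r) ∈ eSet a b ↔ a = Sum.inr j := by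
  rcases a with y | i <;> simp [eSet, Dset, inr_not_mem_Cset, eq_comm]

def fSet (a : Vtx r) (b : Fin 2) : Finset (Vtx r) := Finset.univ \ eSet a b

lemma mem_fSet (a : Vtx r) (b : Fin 2) (x : Vtx r) :
    x ∈ fSet a b ↔ x ∉ eSet a b := by simp [fSet]

/-- the set of leaves missing from `S` -/
def miss (S : Finset (Vtx r)) : Finset (Fin r) :=
  Finset.univ.filter (fun j => Sum.inr j ∉ S)

lemma zf_iff (hr : 2 ≤ r) (S : Finset (Vtx r)) :
    IsZeroForcingSet (completeBipartiteGraph (Fin 1) (Fin r)) S ↔ (miss S).card ≤ 1 := by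
  constructor
  · intro hS
    by_contra h
    push_neg at h
    obtain ⟨j, hj, k, hk, hjk⟩ := Finset.one_lt_card.mp h
    simp only [miss, Finset.mem_filter] at hj hk
    set B : Finset (Vtx r) := Finset.univ \ {Sum.inr j, Sum.inr k} with hB
    have hSB : S ⊆ B := by
      intro x hx
      simp only [hB, Finset.mem_sdiff, Finset.mem_univ, true_and, Finset.mem_insert,
        Finset.mem_singleton]
      rintro (rfl | rfl)
      · exact hj.2 hx
      · exact hk.2 hx
    have hcl : ZFClosed (completeBipartiteGraph (Fin 1) (Fin r)) B := by
      rintro (x | m) hv ⟨w, ⟨hadj, hwB⟩, huniq⟩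
      · have h1 : (Sum.inr j : Vtx r) = w := by
          apply huniq
          constructor
          · simp
          · simp [hB]
        have h2 : (Sum.inr k : Vtx r) = w := by
          apply huniq
          constructor
          · simp
          · simp [hB]
        exact hjk (Sum.inr_injective (h1.trans h2.symm))
      · rcases w with y | i
        · exact hwB (by simp [hB])
        · simp at hadj
    have := hS B hSB hcl
    have : (Sum.inr j : Vtx r) ∈ B := this ▸ Finset.mem_univ _
    simp [hB] at this
  · intro h B hSB hcl
    have hmissB : miss B ⊆ miss S := by
      intro j hj
      simp only [miss, Finset.mem_filter, Finset.mem_univ, true_and] at hj ⊢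
      exact fun hx => hj (hSB hx)
    have hcB : (Sum.inl 0 : Vtx r) ∈ B := by
      by_contra hc
      -- there is a leaf in S
      have hne : ∃ j : Fin r, (Sum.inr j : Vtx r) ∈ S := by
        by_contra hno
        push_neg at hno
        have : miss S = Finset.univ := by
          ext j; simp [miss, hno j]
        rw [this, Finset.card_univ, Fintype.card_fin] at h
        omega
      obtain ⟨j, hjS⟩ := hne
      refine hcl (Sum.inr j) (hSB hjS) ⟨Sum.inl 0, ⟨by simp, hc⟩, ?_⟩
      rintro (y | i) ⟨hadj, hwB⟩
      · exact congrArg Sum.inl (Subsingleton.elim _ _)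
      · simp at hadj
    have hleaf : ∀ j : Fin r, (Sum.inr j : Vtx r) ∈ B := by
      intro j
      by_contra hj
      have hjB : j ∈ miss B := by simp [miss, hj]
      refine hcl (Sum.inl 0) hcB ⟨Sum.inr j, ⟨by simp, hj⟩, ?_⟩
      rintro (y | k) ⟨hadj, hwB⟩
      · simp at hadj
      · have hkB : k ∈ miss B := by simp [miss, hwB]
        have hcard : (miss B).card ≤ 1 := le_trans (Finset.card_le_card hmissB) h
        exact congrArg Sum.inr (Finset.card_le_one.mp hcard k hkB j hjB)
    ext x
    simp only [Finset.mem_univ, iff_true]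
    rcases x with y | j
    · have hy : y = 0 := Subsingleton.elim _ _
      exact hy ▸ hcB
    · exact hleaf j

lemma fSet_zf (hr : 2 ≤ r) (a : Vtx r) (b : Fin 2) :
    IsZeroForcingSet (completeBipartiteGraph (Fin 1) (Fin r)) (fSet a b) := by
  rw [zf_iff hr]
  apply Finset.card_le_one.mpr
  intro j hj k hk
  simp only [miss, Finset.mem_filter, Finset.mem_univ, true_and, mem_fSet, not_not,
    mem_eSet_inr] at hj hk
  exact Sum.inr_injective (hj.symm.trans hk)

lemma split_symmDiff (a a' : Vtx r) (b b' : Fin 2) :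
    symmDiff (eSet a b) (eSet a' b') =
      symmDiff (Cset r b) (Cset r b') ∪ symmDiff (Dset a) (Dset a') := by
  ext x
  rcases x with y | j
  · simp [Finset.mem_symmDiff, Finset.mem_union, eSet, inl_not_mem_Dset]
  · simp [Finset.mem_symmDiff, Finset.mem_union, eSet, inr_not_mem_Cset]

lemma disj_symmDiff (a a' : Vtx r) (b b' : Fin 2) :
    Disjoint (symmDiff (Cset r b) (Cset r b')) (symmDiff (Dset a) (Dset a')) := by
  rw [Finset.disjoint_left]
  intro x hx hx'
  have h1 : x ∈ Cset r b ∪ Cset r b' := by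
    rw [Finset.mem_symmDiff] at hx; rcases hx with ⟨h, _⟩ | ⟨h, _⟩ <;> simp [h]
  have h2 : x ∈ Dset a ∪ Dset a' := by
    rw [Finset.mem_symmDiff] at hx'; rcases hx' with ⟨h, _⟩ | ⟨h, _⟩ <;> simp [h]
  rcases x with y | j
  · rw [Finset.mem_union] at h2
    exact h2.elim (inl_not_mem_Dset a y) (inl_not_mem_Dset a' y)
  · rw [Finset.mem_union] at h1
    exact h1.elim (inr_not_mem_Cset b j) (inr_not_mem_Cset b' j)

lemma card_Cset (b b' : Fin 2) :
    (symmDiff (Cset r b) (Cset r b')).card = if b = b' then 0 else 1 := by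
  fin_cases b <;> fin_cases b' <;>
    simp [Cset, symmDiff_self, ← Finset.bot_eq_empty, symmDiff_bot, bot_symmDiff]

lemma card_Dset (a a' : Vtx r) :
    (symmDiff (Dset a) (Dset a')).card =
      if a = a' then 0 else if a.isLeft ∨ a'.isLeft then 1 else 2 := by
  rcases a with y | i <;> rcases a' with y' | i'
  · have : y = y' := Subsingleton.elim _ _
    simp [this, Dset, symmDiff_self, ← Finset.bot_eq_empty]
  · simp [Dset, symmDiff_self, ← Finset.bot_eq_empty, symmDiff_bot, bot_symmDiff]
  · simp [Dset, symmDiff_self, ← Finset.bot_eq_empty, symmDiff_bot, bot_symmDiff]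
  · by_cases hii : i = i'
    · simp [hii, Dset, symmDiff_self, ← Finset.bot_eq_empty]
    · have hne : (Sum.inr i : Vtx r) ≠ Sum.inr i' := by simp [hii]
      have hsd : symmDiff ({Sum.inr i} : Finset (Vtx r)) {Sum.inr i'} =
          {Sum.inr i, Sum.inr i'} := by
        ext x
        simp only [Finset.mem_symmDiff, Finset.mem_singleton, Finset.mem_insert]
        constructor
        · rintro (⟨rfl, _⟩ | ⟨rfl, _⟩) <;> simp
        · rintro (rfl | rfl)
          · exact Or.inl ⟨rfl, hne⟩
          · exact Or.inr ⟨rfl, hne.symm⟩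
      simp [Dset, hsd, Finset.card_pair hne, hii, hne]

lemma adj_iff (_hr : 2 ≤ r) (a a' : Vtx r) (b b' : Fin 2) :
    (symmDiff (fSet a b) (fSet a' b')).card = 1 ↔
      ((completeBipartiteGraph (Fin 1) (Fin r)).Adj a a' ∧ b = b') ∨ (b ≠ b' ∧ a = a') := by
  have h1 : symmDiff (fSet a b) (fSet a' b') = symmDiff (eSet a b) (eSet a' b') := by
    rw [fSet, fSet, ← Finset.compl_eq_univ_sdiff, ← Finset.compl_eq_univ_sdiff,
      compl_symmDiff_compl]
  rw [h1, split_symmDiff, Finset.card_union_of_disjoint (disj_symmDiff a a' b b'),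
    card_Cset, card_Dset]
  rcases a with y | i <;> rcases a' with y' | i'
  · have : y = y' := Subsingleton.elim _ _
    subst this
    by_cases hb : b = b' <;> simp [hb]
  · by_cases hb : b = b' <;> simp [hb]
  · by_cases hb : b = b' <;> simp [hb]
  · by_cases hii : (Sum.inr i : Vtx r) = Sum.inr i' <;> by_cases hb : b = b' <;>
      simp [hii, hb]

end ZTarStarAux

open ZTarStarAux in
/-- For `r ≥ 2`, the zero forcing TAR graph of the star `K_{1,r}` is isomorphic to the
Cartesian (box) product `K_{1,r} □ K₂`. -/
theorem zTar_star_iso_boxProd (r : ℕ) (hr : 2 ≤ r) :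
    Nonempty
      (tarGraph (IsZeroForcingSet (completeBipartiteGraph (Fin 1) (Fin r)))
        ≃g (completeBipartiteGraph (Fin 1) (Fin r) □ (⊤ : SimpleGraph (Fin 2)))) := by
  classical
  set G := completeBipartiteGraph (Fin 1) (Fin r)
  let f : Vtx r × Fin 2 → {S : Finset (Vtx r) // IsZeroForcingSet G S} :=
    fun p => ⟨fSet p.1 p.2, fSet_zf hr p.1 p.2⟩
  have hinj : Function.Injective f := by
    rintro ⟨a, b⟩ ⟨a', b'⟩ hf
    have hf' : fSet a b = fSet a' b' := congrArg Subtype.val hf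
    have hb : b = b' := by
      have h0 : ((Sum.inl 0 : Vtx r) ∈ fSet a b) ↔ ((Sum.inl 0 : Vtx r) ∈ fSet a' b') := by
        rw [hf']
      rw [mem_fSet, mem_fSet, mem_eSet_inl, mem_eSet_inl] at h0
      fin_cases b <;> fin_cases b' <;> simp_all
    have ha : a = a' := by
      have key : ∀ j : Fin r, (a = Sum.inr j ↔ a' = Sum.inr j) := by
        intro j
        have h0 : ((Sum.inr j : Vtx r) ∈ fSet a b) ↔ ((Sum.inr j : Vtx r) ∈ fSet a' b') := by
          rw [hf']
        rw [mem_fSet, mem_fSet, mem_eSet_inr, mem_eSet_inr] at h0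
        exact not_iff_not.mp h0
      rcases a with y | i <;> rcases a' with y' | i'
      · exact congrArg Sum.inl (Subsingleton.elim _ _)
      · exact absurd ((key i').mpr rfl) (by simp)
      · exact absurd ((key i).mp rfl) (by simp)
      · exact ((key i).mp rfl).symm
    rw [ha, hb]
  have hsurj : Function.Surjective f := by
    rintro ⟨S, hS⟩
    have hm : (miss S).card ≤ 1 := (zf_iff hr S).mp hS
    set b : Fin 2 := if Sum.inl 0 ∈ S then 1 else 0 with hbdef
    have hbmem : ((Sum.inl 0 : Vtx r) ∈ S ↔ ¬ b = 0) := by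
      by_cases hc : (Sum.inl 0 : Vtx r) ∈ S <;> simp [hbdef, hc]
    by_cases hms : miss S = ∅
    · refine ⟨(Sum.inl 0, b), Subtype.ext ?_⟩
      ext x
      rw [mem_fSet]
      rcases x with y | j
      · have : y = 0 := Subsingleton.elim _ _
        subst this
        rw [mem_eSet_inl]
        exact hbmem.symm
      · rw [mem_eSet_inr]
        have : j ∉ miss S := by simp [hms]
        simp only [miss, Finset.mem_filter, Finset.mem_univ, true_and, not_not] at this
        simp [this]
    · obtain ⟨i, hi⟩ := Finset.card_eq_one.mp (le_antisymm hm
        (Finset.card_pos.mpr (Finset.nonempty_of_ne_empty hms)))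
      refine ⟨(Sum.inr i, b), Subtype.ext ?_⟩
      ext x
      rw [mem_fSet]
      rcases x with y | j
      · have : y = 0 := Subsingleton.elim _ _
        subst this
        rw [mem_eSet_inl]
        exact hbmem.symm
      · rw [mem_eSet_inr]
        have hj : j ∈ miss S ↔ j = i := by rw [hi]; simp
        simp only [miss, Finset.mem_filter, Finset.mem_univ, true_and] at hj
        constructor
        · intro hne
          by_contra hjS
          exact hne (congrArg Sum.inr (hj.mp hjS).symm)
        · intro hjS h
          exact hj.mpr (Sum.inr_injective h).symm hjS
  let e : (G □ (⊤ : SimpleGraph (Fin 2))) ≃g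
      tarGraph (IsZeroForcingSet G) := by
    refine ⟨Equiv.ofBijective f ⟨hinj, hsurj⟩, ?_⟩
    rintro ⟨a, b⟩ ⟨a', b'⟩
    show (symmDiff (fSet a b) (fSet a' b')).card = 1 ↔ _
    rw [adj_iff hr a a' b b', SimpleGraph.boxProd_adj]
    simp only [SimpleGraph.top_adj]
    exact Iff.rfl
  exact ⟨e.symm⟩
end

section
/- Let n ≥ 4 and let u and v be distinct vertices of the cycle C_n that are not adjacent in C_n. Then a set S of vertices is a zero forcing set of C_n if and only if S is a zero forcing set of the graph C_n + uv obtained from C_n by adding the edge uv. Consequently the two graphs have exactly the same zero forcing sets and equal zero forcing TAR graphs. -/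
namespace ZFAux

open Fin.CommRing

variable {m : ℕ}

lemma adj_iff {x y : Fin (m+4)} :
    (SimpleGraph.cycleGraph (m+4)).Adj x y ↔ y = x + 1 ∨ y = x - 1 := by
  rw [SimpleGraph.cycleGraph_adj]
  constructor
  · rintro (h | h)
    · exact Or.inr (by linear_combination -h)
    · exact Or.inl (by linear_combination h)
  · rintro (h | h)
    · exact Or.inr (by linear_combination h)
    · exact Or.inl (by linear_combination -h)

lemma succ_ne_pred (x : Fin (m+4)) : x + 1 ≠ x - 1 := by
  intro h
  have h2 : (2 : Fin (m+4)) = 0 := by linear_combination h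
  have := congrArg Fin.val h2
  simp [Fin.val_two, Nat.mod_eq_of_lt (show 2 < m + 4 by omega)] at this

lemma adj_succ (x : Fin (m+4)) : (SimpleGraph.cycleGraph (m+4)).Adj x (x+1) :=
  adj_iff.mpr (Or.inl rfl)

lemma adj_pred (x : Fin (m+4)) : (SimpleGraph.cycleGraph (m+4)).Adj x (x-1) :=
  adj_iff.mpr (Or.inr rfl)

/-- independent set in the cycle. -/
def Indep (S : Finset (Fin (m+4))) : Prop := ∀ a ∈ S, a + 1 ∉ S

lemma indep_closed {S : Finset (Fin (m+4))} (hS : Indep S)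
    {G : SimpleGraph (Fin (m+4))} (hG : SimpleGraph.cycleGraph (m+4) ≤ G) :
    ZFClosed G S := by
  intro a ha ⟨w, hw, huniq⟩
  have h1 : a + 1 ∉ S := hS a ha
  have h2 : a - 1 ∉ S := by
    intro h
    have := hS _ h
    simp at this
    exact this ha
  have e1 : a + 1 = w := huniq _ ⟨hG (adj_succ a), h1⟩
  have e2 : a - 1 = w := huniq _ ⟨hG (adj_pred a), h2⟩
  exact succ_ne_pred a (e1.trans e2.symm)

section chord
variable {u v : Fin (m+4)} (huv : u ≠ v)
  (hadj : ¬ (SimpleGraph.cycleGraph (m+4)).Adj u v)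

-- the chord graph
local notation "G'" => SimpleGraph.cycleGraph (m+4) ⊔ SimpleGraph.fromEdgeSet {s(u, v)}

include huv in
lemma chord_adj {x y : Fin (m+4)} :
    (G').Adj x y ↔ (y = x + 1 ∨ y = x - 1) ∨ ((x = u ∧ y = v) ∨ (x = v ∧ y = u)) := by
  rw [SimpleGraph.sup_adj, adj_iff, SimpleGraph.fromEdgeSet_adj]
  simp only [Set.mem_singleton_iff, Sym2.eq_iff]
  constructor
  · rintro (h | ⟨h, -⟩)
    · exact Or.inl h
    · exact Or.inr h
  · rintro (h | h)
    · exact Or.inl h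
    · refine Or.inr ⟨h, ?_⟩
      rintro rfl
      rcases h with ⟨rfl, rfl⟩ | ⟨rfl, rfl⟩ <;> exact huv rfl

include huv in
lemma force_fwd {B : Finset (Fin (m+4))} (hB : ZFClosed (G') B) {w : Fin (m+4)}
    (hw : w ∈ B) (h1 : w - 1 ∈ B) (h2 : w + 1 ∉ B) :
    (w = u ∧ v ∉ B) ∨ (w = v ∧ u ∉ B) := by
  by_contra hcon
  push_neg at hcon
  apply hB w hw
  refine ⟨w + 1, ⟨(chord_adj huv).mpr (Or.inl (Or.inl rfl)), h2⟩, ?_⟩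
  rintro x ⟨hx, hxB⟩
  rcases (chord_adj huv).mp hx with (rfl | rfl) | (⟨rfl, rfl⟩ | ⟨rfl, rfl⟩)
  · rfl
  · exact absurd h1 hxB
  · exact absurd (hcon.1 rfl) hxB
  · exact absurd (hcon.2 rfl) hxB

include huv in
lemma force_bwd {B : Finset (Fin (m+4))} (hB : ZFClosed (G') B) {w : Fin (m+4)}
    (hw : w ∈ B) (h1 : w + 1 ∈ B) (h2 : w - 1 ∉ B) :
    (w = u ∧ v ∉ B) ∨ (w = v ∧ u ∉ B) := by
  by_contra hcon
  push_neg at hcon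
  apply hB w hw
  refine ⟨w - 1, ⟨(chord_adj huv).mpr (Or.inl (Or.inr rfl)), h2⟩, ?_⟩
  rintro x ⟨hx, hxB⟩
  rcases (chord_adj huv).mp hx with (rfl | rfl) | (⟨rfl, rfl⟩ | ⟨rfl, rfl⟩)
  · exact absurd h1 hxB
  · rfl
  · exact absurd (hcon.1 rfl) hxB
  · exact absurd (hcon.2 rfl) hxB

end chord

lemma univ_of_forward {B : Finset (Fin (m+4))} {a : Fin (m+4)}
    (h : ∀ k : ℕ, a + (k : Fin (m+4)) ∈ B) : B = Finset.univ := by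
  ext x
  simp only [Finset.mem_univ, iff_true]
  have := h (x - a).val
  rw [Fin.cast_val_eq_self] at this
  have e : a + (x - a) = x := by ring
  rwa [e] at this

lemma univ_of_backward {B : Finset (Fin (m+4))} {a : Fin (m+4)}
    (h : ∀ k : ℕ, a - (k : Fin (m+4)) ∈ B) : B = Finset.univ := by
  ext x
  simp only [Finset.mem_univ, iff_true]
  have := h (a - x).val
  rw [Fin.cast_val_eq_self] at this
  have e : a - (a - x) = x := by ring
  rwa [e] at this

lemma cast_sub_one {k : ℕ} (hk : 1 ≤ k) : ((k - 1 : ℕ) : Fin (m+4)) = (k : Fin (m+4)) - 1 := by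
  rw [Nat.cast_sub hk, Nat.cast_one]

/-- In the plain cycle, a closed set containing two adjacent vertices is everything. -/
lemma cycle_univ {B : Finset (Fin (m+4))} (hB : ZFClosed (SimpleGraph.cycleGraph (m+4)) B)
    {a : Fin (m+4)} (ha : a ∈ B) (ha1 : a + 1 ∈ B) : B = Finset.univ := by
  apply univ_of_forward (a := a)
  intro k
  induction k using Nat.strong_induction_on with
  | _ k ih =>
    match k, ih with
    | 0, _ => simpa using ha
    | 1, _ => simpa using ha1
    | (k+2), ih =>
      by_contra hk
      set w : Fin (m+4) := a + ((k+1 : ℕ) : Fin (m+4)) with hw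
      have hwB : w ∈ B := ih (k+1) (by omega)
      have hw1 : w - 1 ∈ B := by
        have := ih k (by omega)
        have e : a + ((k : ℕ) : Fin (m+4)) = w - 1 := by
          rw [hw]; push_cast; ring
        rwa [e] at this
      have hw2 : w + 1 ∉ B := by
        have e : a + ((k+2 : ℕ) : Fin (m+4)) = w + 1 := by
          rw [hw]; push_cast; ring
        rwa [e] at hk
      apply hB w hwB
      refine ⟨w + 1, ⟨adj_succ w, hw2⟩, ?_⟩
      rintro x ⟨hx, hxB⟩
      rcases adj_iff.mp hx with rfl | rfl
      · rfl
      · exact absurd hw1 hxB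

/-- In the cycle plus a chord, a closed set containing two adjacent vertices is everything. -/
lemma chord_univ {u v : Fin (m+4)} (huv : u ≠ v)
    {B : Finset (Fin (m+4))}
    (hB : ZFClosed (SimpleGraph.cycleGraph (m+4) ⊔ SimpleGraph.fromEdgeSet {s(u, v)}) B)
    {a : Fin (m+4)} (ha : a ∈ B) (ha1 : a + 1 ∈ B) : B = Finset.univ := by
  by_cases hf : ∃ k : ℕ, a + (k : Fin (m+4)) ∉ B
  · by_cases hbk : ∃ k : ℕ, (a + 1) - (k : Fin (m+4)) ∉ B
    · -- both directions stall: contradiction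
      exfalso
      obtain ⟨k0, hk0spec, hk0min⟩ : ∃ k0 : ℕ, (a + (k0 : Fin (m+4)) ∉ B) ∧
          ∀ j < k0, a + (j : Fin (m+4)) ∈ B :=
        ⟨Nat.find hf, Nat.find_spec hf, fun j hj => not_not.mp (Nat.find_min hf hj)⟩
      obtain ⟨m0, hm0spec, hm0min⟩ : ∃ m0 : ℕ, ((a + 1) - (m0 : Fin (m+4)) ∉ B) ∧
          ∀ j < m0, (a + 1) - (j : Fin (m+4)) ∈ B :=
        ⟨Nat.find hbk, Nat.find_spec hbk, fun j hj => not_not.mp (Nat.find_min hbk hj)⟩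
      have hk02 : 2 ≤ k0 := by
        rcases Nat.lt_or_ge k0 2 with h | h
        · interval_cases k0
          · simp at hk0spec; exact absurd ha hk0spec
          · simp at hk0spec; exact absurd ha1 hk0spec
        · exact h
      have hm02 : 2 ≤ m0 := by
        rcases Nat.lt_or_ge m0 2 with h | h
        · interval_cases m0
          · simp at hm0spec; exact absurd ha1 hm0spec
          · simp at hm0spec; exact absurd ha hm0spec
        · exact h
      set w1 : Fin (m+4) := a + ((k0 - 1 : ℕ) : Fin (m+4)) with hw1def
      set w2 : Fin (m+4) := (a + 1) - ((m0 - 1 : ℕ) : Fin (m+4)) with hw2def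
      have hw1B : w1 ∈ B := hk0min (k0-1) (by omega)
      have hw1p : w1 - 1 ∈ B := by
        have e : a + ((k0 - 2 : ℕ) : Fin (m+4)) = w1 - 1 := by
          rw [hw1def, Nat.cast_sub (by omega), Nat.cast_sub (by omega)]
          push_cast; ring
        have : a + ((k0 - 2 : ℕ) : Fin (m+4)) ∈ B := hk0min (k0-2) (by omega)
        rwa [e] at this
      have hw1s : w1 + 1 ∉ B := by
        have e : a + ((k0 : ℕ) : Fin (m+4)) = w1 + 1 := by
          rw [hw1def, Nat.cast_sub (by omega)]
          push_cast; ring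
        rwa [e] at hk0spec
      have hw2B : w2 ∈ B := hm0min (m0-1) (by omega)
      have hw2s : w2 + 1 ∈ B := by
        have e : (a + 1) - ((m0 - 2 : ℕ) : Fin (m+4)) = w2 + 1 := by
          rw [hw2def, Nat.cast_sub (by omega), Nat.cast_sub (by omega)]
          push_cast; ring
        have : (a + 1) - ((m0 - 2 : ℕ) : Fin (m+4)) ∈ B := hm0min (m0-2) (by omega)
        rwa [e] at this
      have hw2p : w2 - 1 ∉ B := by
        have e : (a + 1) - ((m0 : ℕ) : Fin (m+4)) = w2 - 1 := by
          rw [hw2def, Nat.cast_sub (by omega)]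
          push_cast; ring
        rwa [e] at hm0spec
      have hne : w1 ≠ w2 := by
        intro h; rw [h] at hw1s; exact hw1s hw2s
      rcases force_fwd huv hB hw1B hw1p hw1s with ⟨rfl, hv⟩ | ⟨rfl, hu⟩ <;>
        rcases force_bwd huv hB hw2B hw2s hw2p with ⟨he, hv'⟩ | ⟨he, hu'⟩
      · exact hne he.symm
      · exact hv (he ▸ hw2B)
      · exact hu (he ▸ hw2B)
      · exact hne he.symm
    · push_neg at hbk
      exact univ_of_backward (a := a + 1) hbk
  · push_neg at hf
    exact univ_of_forward (a := a) hf

lemma indep_univ_false : ¬ Indep (Finset.univ : Finset (Fin (m+4))) := by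
  intro h
  exact h 0 (Finset.mem_univ _) (Finset.mem_univ _)

lemma zfs_iff_not_indep {S : Finset (Fin (m+4))}
    {G : SimpleGraph (Fin (m+4))} (hG : SimpleGraph.cycleGraph (m+4) ≤ G)
    (huniv : ∀ B : Finset (Fin (m+4)), ZFClosed G B →
      ∀ a : Fin (m+4), a ∈ B → a + 1 ∈ B → B = Finset.univ) :
    IsZeroForcingSet G S ↔ ¬ Indep S := by
  constructor
  · intro hzfs hind
    have := hzfs S (subset_refl S) (indep_closed hind hG)
    rw [this] at hind
    exact indep_univ_false hind
  · intro hind B hSB hB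
    simp only [Indep, not_forall] at hind
    obtain ⟨a, ha, ha1⟩ := hind
    rw [not_not] at ha1
    exact huniv B hB a (hSB ha) (hSB ha1)

end ZFAux

/-- For `n ≥ 4` and nonadjacent distinct vertices `u, v` of the cycle `C_n`, a set `S`
is a zero forcing set of `C_n` iff it is a zero forcing set of `C_n + uv`; consequently
the two graphs have exactly the same zero forcing sets. -/
theorem zfs_cycle_eq_zfs_cycle_add_chord (n : ℕ) (hn : 4 ≤ n) (u v : Fin n)
    (huv : u ≠ v) (hadj : ¬ (SimpleGraph.cycleGraph n).Adj u v) :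
    (∀ S : Finset (Fin n),
        IsZeroForcingSet (SimpleGraph.cycleGraph n) S ↔
        IsZeroForcingSet
          (SimpleGraph.cycleGraph n ⊔ SimpleGraph.fromEdgeSet {s(u, v)}) S) ∧
    IsZeroForcingSet (SimpleGraph.cycleGraph n) =
      IsZeroForcingSet
        (SimpleGraph.cycleGraph n ⊔ SimpleGraph.fromEdgeSet {s(u, v)}) := by
  obtain ⟨m, rfl⟩ : ∃ m, n = m + 4 := ⟨n - 4, by omega⟩
  have main : ∀ S : Finset (Fin (m+4)),
      IsZeroForcingSet (SimpleGraph.cycleGraph (m+4)) S ↔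
      IsZeroForcingSet
        (SimpleGraph.cycleGraph (m+4) ⊔ SimpleGraph.fromEdgeSet {s(u, v)}) S := by
    intro S
    rw [ZFAux.zfs_iff_not_indep le_rfl
        (fun B hB a ha ha1 => ZFAux.cycle_univ hB ha ha1),
      ZFAux.zfs_iff_not_indep le_sup_left
        (fun B hB a ha ha1 => ZFAux.chord_univ huv hB ha ha1)]
  exact ⟨main, funext fun S => propext (main S)⟩
end

section
/- Let r ≥ 2 and let G be a simple graph on at least 3 vertices with no isolated vertices. If the zero forcing TAR graph of G is isomorphic to the Cartesian (box) product K_{1,r} □ K₂, then G is isomorphic to the star K_{1,r}. -/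
set_option linter.unusedSectionVars false
set_option linter.unusedVariables false

open Finset

section AuxZF
variable {W : Type*} [Fintype W] [DecidableEq W] (G : SimpleGraph W)

lemma zf_univ : IsZeroForcingSet G univ := fun _ hB _ => univ_subset_iff.mp hB

lemma not_mem_erase2 {u v x : W} : x ∉ (univ.erase u).erase v ↔ x = v ∨ x = u := by
  simp only [mem_erase, mem_univ, and_true, not_and, not_not]
  tauto

lemma not_zfclosed_erase (hnoiso : ∀ v : W, ∃ w : W, G.Adj v w) (v : W) :
    ¬ ZFClosed G (univ.erase v) := by
  intro hcl
  obtain ⟨w, hw⟩ := hnoiso v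
  have hwv : w ≠ v := fun h => G.loopless.irrefl v (h ▸ hw)
  refine hcl w (mem_erase.mpr ⟨hwv, mem_univ _⟩) ⟨v, ⟨hw.symm, by simp⟩, ?_⟩
  rintro y ⟨-, hy⟩
  by_contra hne
  exact hy (mem_erase.mpr ⟨hne, mem_univ _⟩)

lemma zf_erase (hnoiso : ∀ v : W, ∃ w : W, G.Adj v w) (v : W) :
    IsZeroForcingSet G (univ.erase v) := by
  intro B hB hcl
  by_cases hv : v ∈ B
  · refine eq_univ_of_forall fun x => ?_
    by_cases hx : x = v
    · exact hx ▸ hv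
    · exact hB (mem_erase.mpr ⟨hx, mem_univ _⟩)
  · have hBe : B = univ.erase v := by
      apply subset_antisymm
      · exact fun x hx => mem_erase.mpr ⟨fun h => hv (h ▸ hx), mem_univ _⟩
      · exact hB
    exact absurd (hBe ▸ hcl) (not_zfclosed_erase G hnoiso v)

lemma zfclosed_of_not_zf (hnoiso : ∀ v : W, ∃ w : W, G.Adj v w) {u v : W}
    (h : ¬ IsZeroForcingSet G ((univ.erase u).erase v)) :
    ZFClosed G ((univ.erase u).erase v) := by
  unfold IsZeroForcingSet at h
  push_neg at h
  obtain ⟨B, hSB, hcl, hBne⟩ := h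
  by_cases hu : u ∈ B <;> by_cases hv : v ∈ B
  · refine absurd (eq_univ_of_forall fun x => ?_) hBne
    by_cases hx1 : x = u
    · exact hx1 ▸ hu
    · by_cases hx2 : x = v
      · exact hx2 ▸ hv
      · exact hSB (mem_erase.mpr ⟨hx2, mem_erase.mpr ⟨hx1, mem_univ _⟩⟩)
  · have hBe : B = univ.erase v := by
      apply subset_antisymm
      · exact fun x hx => mem_erase.mpr ⟨fun h => hv (h ▸ hx), mem_univ _⟩
      · intro x hx
        rcases mem_erase.mp hx with ⟨hxv, -⟩
        by_cases hx1 : x = u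
        · exact hx1 ▸ hu
        · exact hSB (mem_erase.mpr ⟨hxv, mem_erase.mpr ⟨hx1, mem_univ _⟩⟩)
    exact absurd (hBe ▸ hcl) (not_zfclosed_erase G hnoiso v)
  · have hBe : B = univ.erase u := by
      apply subset_antisymm
      · exact fun x hx => mem_erase.mpr ⟨fun h => hu (h ▸ hx), mem_univ _⟩
      · intro x hx
        rcases mem_erase.mp hx with ⟨hxu, -⟩
        by_cases hx2 : x = v
        · exact hx2 ▸ hv
        · exact hSB (mem_erase.mpr ⟨hx2, mem_erase.mpr ⟨hxu, mem_univ _⟩⟩)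
    exact absurd (hBe ▸ hcl) (not_zfclosed_erase G hnoiso u)
  · have hBe : B = (univ.erase u).erase v := by
      apply subset_antisymm
      · intro x hx
        exact mem_erase.mpr ⟨fun h => hv (h ▸ hx), mem_erase.mpr ⟨fun h => hu (h ▸ hx), mem_univ _⟩⟩
      · exact hSB
    exact hBe ▸ hcl

lemma adj_iff_of_closed {u v : W} (hcl : ZFClosed G ((univ.erase u).erase v))
    {x : W} (hxu : x ≠ u) (hxv : x ≠ v) :
    G.Adj x u ↔ G.Adj x v := by
  have hxS : x ∈ (univ.erase u).erase v := mem_erase.mpr ⟨hxv, mem_erase.mpr ⟨hxu, mem_univ _⟩⟩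
  constructor
  · intro hadj
    by_contra hnadj
    refine hcl x hxS ⟨u, ⟨hadj, not_mem_erase2.mpr (Or.inr rfl)⟩, ?_⟩
    rintro y ⟨hy1, hy2⟩
    rcases not_mem_erase2.mp hy2 with h | h
    · exact absurd (h ▸ hy1) hnadj
    · exact h
  · intro hadj
    by_contra hnadj
    refine hcl x hxS ⟨v, ⟨hadj, not_mem_erase2.mpr (Or.inl rfl)⟩, ?_⟩
    rintro y ⟨hy1, hy2⟩
    rcases not_mem_erase2.mp hy2 with h | h
    · exact h
    · exact absurd (h ▸ hy1) hnadj

lemma exists_forcer {u v₀ : W} (h : ¬ ZFClosed G ((univ.erase v₀).erase u)) (h0u : v₀ ≠ u) :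
    ∃ x, x ≠ v₀ ∧ x ≠ u ∧ ((G.Adj x v₀ ∧ ¬G.Adj x u) ∨ (G.Adj x u ∧ ¬G.Adj x v₀)) := by
  unfold ZFClosed at h
  push_neg at h
  obtain ⟨x, hx, w, ⟨hadj, hw⟩, huniq⟩ := h
  obtain ⟨hxu, hxmem⟩ := mem_erase.mp hx
  obtain ⟨hxv₀, -⟩ := mem_erase.mp hxmem
  refine ⟨x, hxv₀, hxu, ?_⟩
  rcases not_mem_erase2.mp hw with rfl | rfl
  · refine Or.inr ⟨hadj, fun hadj0 => ?_⟩
    have := huniq v₀ ⟨hadj0, not_mem_erase2.mpr (Or.inr rfl)⟩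
    exact h0u this
  · refine Or.inl ⟨hadj, fun hadju => ?_⟩
    have := huniq u ⟨hadju, not_mem_erase2.mpr (Or.inl rfl)⟩
    exact h0u this.symm

lemma symmDiff_erase_self {X : Finset W} {x : W} (hx : x ∈ X) : symmDiff X (X.erase x) = {x} := by
  ext a
  by_cases h : a = x <;> simp [Finset.mem_symmDiff, h, hx]

lemma card_symmDiff_one {X Y : Finset W} (h : (symmDiff X Y).card = 1) :
    (∃ x, x ∉ X ∧ Y = insert x X) ∨ (∃ x, x ∈ X ∧ Y = X.erase x) := by
  obtain ⟨x, hx⟩ := Finset.card_eq_one.mp h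
  have hmem : ∀ a : W, ((a ∈ X ∧ a ∉ Y) ∨ (a ∈ Y ∧ a ∉ X)) ↔ a = x := fun a => by
    rw [← Finset.mem_symmDiff, hx, Finset.mem_singleton]
  by_cases hxX : x ∈ X
  · right
    refine ⟨x, hxX, ?_⟩
    have hxY : x ∉ Y := by
      rcases (hmem x).mpr rfl with ⟨-, h'⟩ | ⟨-, h'⟩
      · exact h'
      · exact absurd hxX h'
    ext a
    simp only [mem_erase]
    constructor
    · intro ha
      have hax : a ≠ x := fun h' => hxY (h' ▸ ha)
      refine ⟨hax, ?_⟩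
      by_contra haX
      exact hax ((hmem a).mp (Or.inr ⟨ha, haX⟩))
    · rintro ⟨hax, haX⟩
      by_contra haY
      exact hax ((hmem a).mp (Or.inl ⟨haX, haY⟩))
  · left
    refine ⟨x, hxX, ?_⟩
    have hxY : x ∈ Y := by
      rcases (hmem x).mpr rfl with ⟨h', -⟩ | ⟨h', -⟩
      · exact absurd h' hxX
      · exact h'
    ext a
    simp only [mem_insert]
    constructor
    · intro ha
      by_cases hax : a = x
      · exact Or.inl hax
      · right
        by_contra haX
        exact hax ((hmem a).mp (Or.inr ⟨ha, haX⟩))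
    · rintro (rfl | haX)
      · exact hxY
      · by_contra haY
        exact hxX (((hmem a).mp (Or.inl ⟨haX, haY⟩)) ▸ haX)

end AuxZF

lemma adjC {r : ℕ} (z : Fin 1) (i : Fin 2) (a : Fin 1 ⊕ Fin r) (b : Fin 2) :
    (completeBipartiteGraph (Fin 1) (Fin r) □ (⊤ : SimpleGraph (Fin 2))).Adj (Sum.inl z, i) (a, b) ↔
      ((a = Sum.inl z ∧ b ≠ i) ∨ (a.isRight ∧ b = i)) := by
  cases a <;>
    simp [SimpleGraph.boxProd_adj, eq_comm, ne_comm, Subsingleton.elim (α := Fin 1)]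
  exact and_comm

lemma adjL {r : ℕ} (j : Fin r) (i : Fin 2) (a : Fin 1 ⊕ Fin r) (b : Fin 2) :
    (completeBipartiteGraph (Fin 1) (Fin r) □ (⊤ : SimpleGraph (Fin 2))).Adj (Sum.inr j, i) (a, b) ↔
      ((a.isLeft ∧ b = i) ∨ (a = Sum.inr j ∧ b ≠ i)) := by
  cases a <;>
    simp [SimpleGraph.boxProd_adj, eq_comm, ne_comm, Sum.inr.injEq]
  exact and_comm

lemma fin2_eq_add_one {i b : Fin 2} (h : b ≠ i) : b = i + 1 := by revert i b; decide

lemma fin2_add_one_ne (i : Fin 2) : i + 1 ≠ i := by revert i; decide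

/-- For `r ≥ 2`, if `G` is a graph on at least 3 vertices with no isolated vertices
whose zero forcing TAR graph is isomorphic to `K_{1,r} □ K₂`, then `G ≅ K_{1,r}`. -/
theorem star_of_zTar_iso_star_boxProd {W : Type*} [Fintype W] [DecidableEq W]
    (G : SimpleGraph W) (r : ℕ) (hr : 2 ≤ r) (hcard : 3 ≤ Fintype.card W)
    (hnoiso : ∀ v : W, ∃ w : W, G.Adj v w)
    (h : Nonempty
      (tarGraph (IsZeroForcingSet G)
        ≃g (completeBipartiteGraph (Fin 1) (Fin r) □ (⊤ : SimpleGraph (Fin 2))))) :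
    Nonempty (G ≃g completeBipartiteGraph (Fin 1) (Fin r)) := by
  classical
  obtain ⟨e⟩ := h
  let Ev : W → {S : Finset W // IsZeroForcingSet G S} :=
    fun v => ⟨Finset.univ.erase v, zf_erase G hnoiso v⟩
  let U : {S : Finset W // IsZeroForcingSet G S} := ⟨Finset.univ, zf_univ G⟩
  have hEv_inj : Function.Injective Ev := by
    intro a b hab
    by_contra hne
    have ha : a ∈ Finset.univ.erase b := Finset.mem_erase.mpr ⟨hne, Finset.mem_univ _⟩
    have hmem : a ∈ Finset.univ.erase a := by
      rw [show Finset.univ.erase a = Finset.univ.erase b from congrArg Subtype.val hab]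
      exact ha
    exact (Finset.mem_erase.mp hmem).1 rfl
  have hadjU : ∀ v, (tarGraph (IsZeroForcingSet G)).Adj U (Ev v) := fun v => by
    show (symmDiff Finset.univ (Finset.univ.erase v)).card = 1
    rw [symmDiff_erase_self (Finset.mem_univ v), Finset.card_singleton]
  have hadjU' : ∀ S, (tarGraph (IsZeroForcingSet G)).Adj U S → ∃ v, S = Ev v := by
    intro S hS
    rcases card_symmDiff_one hS with ⟨x, hx, -⟩ | ⟨x, -, hxe⟩
    · exact absurd (Finset.mem_univ x) hx
    · exact ⟨x, Subtype.ext hxe⟩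
  have hadjEv : ∀ (v : W) S, (tarGraph (IsZeroForcingSet G)).Adj (Ev v) S →
      S = U ∨ ∃ u, u ≠ v ∧ S.1 = (Finset.univ.erase v).erase u := by
    intro v S hS
    rcases card_symmDiff_one hS with ⟨x, hx, hins⟩ | ⟨x, hxm, hxe⟩
    · left
      have hxv : x = v := by
        by_contra h'
        exact hx (Finset.mem_erase.mpr ⟨h', Finset.mem_univ _⟩)
      apply Subtype.ext
      rw [hins, hxv, Finset.insert_erase (Finset.mem_univ v)]
    · right
      exact ⟨x, (Finset.mem_erase.mp hxm).1, hxe⟩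
  rcases hEU : e U with ⟨a₀, i⟩
  cases a₀ with
  | inr j =>
    exfalso
    have hopt : ∀ v, e (Ev v) = (Sum.inl 0, i) ∨ e (Ev v) = (Sum.inr j, i + 1) := by
      intro v
      have hadj := e.map_rel_iff.mpr (hadjU v)
      rw [hEU] at hadj
      rcases hv : e (Ev v) with ⟨a, b⟩
      rw [hv, adjL] at hadj
      rcases hadj with ⟨hl, hb⟩ | ⟨ha, hb⟩
      · left
        obtain ⟨z, rfl⟩ := Sum.isLeft_iff.mp hl
        rw [Subsingleton.elim z 0, hb]
      · right
        rw [ha, fin2_eq_add_one hb]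
    have hinj : Function.Injective fun v => decide (e (Ev v) = (Sum.inl 0, i)) := by
      intro v w hvw
      rcases hopt v with h1 | h1 <;> rcases hopt w with h2 | h2 <;>
        first
          | exact hEv_inj (e.injective (h1.trans h2.symm))
          | (exfalso; simp [h1, h2, fin2_add_one_ne i] at hvw)
    have hle := Fintype.card_le_of_injective _ hinj
    rw [Fintype.card_bool] at hle
    omega
  | inl z =>
    have hccadj : (completeBipartiteGraph (Fin 1) (Fin r) □ (⊤ : SimpleGraph (Fin 2))).Adj
        (Sum.inl z, i) (Sum.inl z, i + 1) := by
      rw [adjC]; exact Or.inl ⟨rfl, fin2_add_one_ne i⟩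
    have h1 : (tarGraph (IsZeroForcingSet G)).Adj U (e.symm (Sum.inl z, i + 1)) := by
      have := e.symm.map_rel_iff.mpr hccadj
      rwa [← hEU, e.symm_apply_apply] at this
    obtain ⟨v₀, hv₀⟩ := hadjU' _ h1
    have hEv₀ : e (Ev v₀) = (Sum.inl z, i + 1) := by rw [← hv₀, e.apply_symm_apply]
    have hvne : ∀ v : W, ¬ v = v₀ → ∃ jv : Fin r, e (Ev v) = (Sum.inr jv, i) := by
      intro v hv
      have hadj := e.map_rel_iff.mpr (hadjU v)
      rw [hEU] at hadj
      rcases hv2 : e (Ev v) with ⟨a, b⟩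
      rw [hv2, adjC] at hadj
      rcases hadj with ⟨ha, hb⟩ | ⟨ha, hb⟩
      · exfalso
        apply hv
        apply hEv_inj
        apply e.injective
        rw [hv2, hEv₀, ha, fin2_eq_add_one hb]
      · obtain ⟨jv, rfl⟩ := Sum.isRight_iff.mp ha
        exact ⟨jv, by rw [hb]⟩

    have hleaf : ∀ jv : Fin r, ∃ v : W, ¬ v = v₀ ∧ e (Ev v) = (Sum.inr jv, i) := by
      intro jv
      have hadj : (completeBipartiteGraph (Fin 1) (Fin r) □ (⊤ : SimpleGraph (Fin 2))).Adj
          (Sum.inl z, i) (Sum.inr jv, i) := by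
        rw [adjC]; exact Or.inr ⟨rfl, rfl⟩
      have h2 : (tarGraph (IsZeroForcingSet G)).Adj U (e.symm (Sum.inr jv, i)) := by
        have := e.symm.map_rel_iff.mpr hadj
        rwa [← hEU, e.symm_apply_apply] at this
      obtain ⟨v, hv⟩ := hadjU' _ h2
      have hEvv : e (Ev v) = (Sum.inr jv, i) := by rw [← hv, e.apply_symm_apply]
      refine ⟨v, fun hveq => ?_, hEvv⟩
      rw [hveq, hEv₀] at hEvv
      simp at hEvv
    let jmap : {v : W // ¬ v = v₀} → Fin r := fun v => (hvne v.1 v.2).choose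
    have hjmap : ∀ v : {v : W // ¬ v = v₀}, e (Ev v.1) = (Sum.inr (jmap v), i) :=
      fun v => (hvne v.1 v.2).choose_spec
    have hjinj : Function.Injective jmap := by
      intro v w hvw
      apply Subtype.ext
      apply hEv_inj
      apply e.injective
      rw [hjmap v, hjmap w, hvw]
    have hjsurj : Function.Surjective jmap := by
      intro jv
      obtain ⟨v, hv, hEvv⟩ := hleaf jv
      refine ⟨⟨v, hv⟩, ?_⟩
      have := (hjmap ⟨v, hv⟩).symm.trans hEvv
      simpa using this
    have hcardsub : Fintype.card {v : W // ¬ v = v₀} = r := by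
      rw [Fintype.card_congr (Equiv.ofBijective jmap ⟨hjinj, hjsurj⟩), Fintype.card_fin]
    have hF1 : ∀ u : W, u ≠ v₀ → IsZeroForcingSet G ((Finset.univ.erase v₀).erase u) := by
      have hq : ∀ jv : Fin r, ∃ u : W, ¬ u = v₀ ∧
          (e.symm (Sum.inr jv, i + 1)).1 = (Finset.univ.erase v₀).erase u := by
        intro jv
        have hadj : (completeBipartiteGraph (Fin 1) (Fin r) □ (⊤ : SimpleGraph (Fin 2))).Adj
            (Sum.inl z, i + 1) (Sum.inr jv, i + 1) := by
          rw [adjC]; exact Or.inr ⟨rfl, rfl⟩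
        have h2 : (tarGraph (IsZeroForcingSet G)).Adj (Ev v₀) (e.symm (Sum.inr jv, i + 1)) := by
          have := e.symm.map_rel_iff.mpr hadj
          rwa [hv₀] at this
        rcases hadjEv v₀ _ h2 with hU | ⟨u, hu, hset⟩
        · exfalso
          have := congrArg e hU
          rw [e.apply_symm_apply, hEU] at this
          simpa using this
        · exact ⟨u, hu, hset⟩
      let qmap : Fin r → {u : W // ¬ u = v₀} := fun jv => ⟨(hq jv).choose, (hq jv).choose_spec.1⟩
      have hqspec : ∀ jv, (e.symm (Sum.inr jv, i + 1)).1 =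
          (Finset.univ.erase v₀).erase (qmap jv).1 := fun jv => (hq jv).choose_spec.2
      have hqinj : Function.Injective qmap := by
        intro a b hab
        have h1 := hqspec a
        have h2 := hqspec b
        rw [hab, ← h2] at h1
        have : e.symm (Sum.inr a, i + 1) = e.symm (Sum.inr b, i + 1) := Subtype.ext h1
        have := e.symm.injective this
        simpa using this
      have hqbij : Function.Bijective qmap :=
        (Fintype.bijective_iff_injective_and_card qmap).mpr
          ⟨hqinj, by rw [Fintype.card_fin, hcardsub]⟩
      intro u hu
      obtain ⟨jv, hjv⟩ := hqbij.2 ⟨u, hu⟩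
      have hs := hqspec jv
      rw [hjv] at hs
      rw [← hs]
      exact (e.symm (Sum.inr jv, i + 1)).2
    have hF2 : ∀ u v : W, u ≠ v₀ → v ≠ v₀ → u ≠ v →
        ¬ IsZeroForcingSet G ((Finset.univ.erase u).erase v) := by
      intro u v hu hv huv hPS
      have hadjuX : (tarGraph (IsZeroForcingSet G)).Adj (Ev u) ⟨_, hPS⟩ := by
        show (symmDiff (Finset.univ.erase u) ((Finset.univ.erase u).erase v)).card = 1
        rw [symmDiff_erase_self (Finset.mem_erase.mpr ⟨Ne.symm huv, Finset.mem_univ _⟩),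
          Finset.card_singleton]
      have hadjvX : (tarGraph (IsZeroForcingSet G)).Adj (Ev v) ⟨_, hPS⟩ := by
        show (symmDiff (Finset.univ.erase v) ((Finset.univ.erase u).erase v)).card = 1
        rw [Finset.erase_right_comm,
          symmDiff_erase_self (Finset.mem_erase.mpr ⟨huv, Finset.mem_univ _⟩),
          Finset.card_singleton]
      obtain ⟨ju, hju⟩ := hvne u hu
      obtain ⟨jv, hjv⟩ := hvne v hv
      have h1 := e.map_rel_iff.mpr hadjuX
      have h2 := e.map_rel_iff.mpr hadjvX
      rw [hju] at h1
      rw [hjv] at h2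
      rcases hx : e ⟨_, hPS⟩ with ⟨a, b⟩
      rw [hx, adjL] at h1
      rw [hx, adjL] at h2
      rcases h1 with ⟨hl, hb⟩ | ⟨ha, hb⟩
      · obtain ⟨z', rfl⟩ := Sum.isLeft_iff.mp hl
        have hXU : (⟨_, hPS⟩ : {S : Finset W // IsZeroForcingSet G S}) = U := by
          apply e.injective
          rw [hx, hEU, hb, Subsingleton.elim z' z]
        have hval : (Finset.univ.erase u).erase v = Finset.univ := congrArg Subtype.val hXU
        have : u ∈ (Finset.univ.erase u).erase v := by rw [hval]; exact Finset.mem_univ u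
        exact (Finset.mem_erase.mp ((Finset.mem_erase.mp this).2)).1 rfl
      · rcases h2 with ⟨hl2, hb2⟩ | ⟨ha2, hb2⟩
        · rw [ha] at hl2
          simp at hl2
        · have hj : ju = jv := by
            rw [ha] at ha2
            simpa using ha2
          apply huv
          apply hEv_inj
          apply e.injective
          rw [hju, hjv, hj]
    have hC1 : ∀ u v x : W, u ≠ v₀ → v ≠ v₀ → u ≠ v → x ≠ u → x ≠ v →
        (G.Adj x u ↔ G.Adj x v) := by
      intro u v x hu hv huv hxu hxv
      exact adj_iff_of_closed G (zfclosed_of_not_zf G hnoiso (hF2 u v hu hv huv)) hxu hxv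
    obtain ⟨w₀, hw₀⟩ := hnoiso v₀
    have hw₀v : w₀ ≠ v₀ := fun h' => G.loopless.irrefl v₀ (h' ▸ hw₀)
    have hE1 : ∀ u : W, u ≠ v₀ → G.Adj v₀ u := by
      intro u hu
      by_cases huw : u = w₀
      · exact huw ▸ hw₀
      · exact (hC1 w₀ u v₀ hw₀v hu (fun h' => huw h'.symm) (Ne.symm hw₀v) (Ne.symm hu)).mp hw₀
    have hE2 : ∀ u v : W, u ≠ v₀ → v ≠ v₀ → ¬ G.Adj u v := by
      intro u v hu hv hadj
      have huv : u ≠ v := G.ne_of_adj hadj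
      have hnc : ¬ ZFClosed G ((Finset.univ.erase v₀).erase u) := by
        intro hcl
        have huniv := hF1 u hu _ (Finset.Subset.refl _) hcl
        have hu2 : u ∈ (Finset.univ.erase v₀).erase u := by
          rw [huniv]; exact Finset.mem_univ u
        exact (Finset.mem_erase.mp hu2).1 rfl
      obtain ⟨x, hxv₀, hxu, hor⟩ := exists_forcer G hnc (Ne.symm hu)
      have hxadj : G.Adj x v₀ := (hE1 x hxv₀).symm
      have hnadj : ¬ G.Adj x u := by
        rcases hor with ⟨-, h'⟩ | ⟨-, h'⟩
        · exact h'
        · exact absurd hxadj h'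
      by_cases hxveq : x = v
      · exact hnadj (hxveq ▸ hadj.symm)
      · exact hnadj
          (((hC1 v x u hv hxv₀ (fun h' => hxveq h'.symm) huv (Ne.symm hxu)).mp hadj).symm)
    have hc1 : Fintype.card {x : W // x = v₀} = 1 := Fintype.card_subtype_eq v₀
    let e1 : {x : W // x = v₀} ≃ Fin 1 := Fintype.equivFinOfCardEq hc1
    let e2 : {x : W // ¬ x = v₀} ≃ Fin r := Fintype.equivFinOfCardEq hcardsub
    let f : W ≃ Fin 1 ⊕ Fin r :=
      (Equiv.sumCompl (· = v₀)).symm.trans (Equiv.sumCongr e1 e2)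
    have hf : ∀ a : W, (f a).isLeft ↔ a = v₀ := by
      intro a
      by_cases ha : a = v₀
      · simp [f, Equiv.sumCompl_symm_apply_of_pos ha, ha]
      · simp [f, Equiv.sumCompl_symm_apply_of_neg ha, ha]
    refine ⟨⟨f, ?_⟩⟩
    intro a b
    show (completeBipartiteGraph (Fin 1) (Fin r)).Adj (f a) (f b) ↔ G.Adj a b
    rw [completeBipartiteGraph_adj]
    have hg : ∀ a : W, (f a).isRight ↔ ¬ a = v₀ := by
      intro a
      rw [← hf a]
      cases (f a) <;> simp
    constructor
    · rintro (⟨hLa, hRb⟩ | ⟨hRa, hLb⟩)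
      · rw [(hf a).mp hLa]
        exact hE1 b ((hg b).mp hRb)
      · rw [(hf b).mp hLb]
        exact (hE1 a ((hg a).mp hRa)).symm
    · intro hadj
      by_cases ha : a = v₀ <;> by_cases hb : b = v₀
      · exfalso
        rw [ha, hb] at hadj
        exact G.loopless.irrefl v₀ hadj
      · exact Or.inl ⟨(hf a).mpr ha, (hg b).mpr hb⟩
      · exact Or.inr ⟨(hg a).mpr ha, (hf b).mpr hb⟩
      · exact absurd hadj (hE2 a b ha hb)
end

section
/- Let G be a finite simple graph containing a set T of pairwise twin vertices with |T| ≥ 3, let u ∈ T, and let G_u denote the induced subgraph of G on V(G) \ {u}. If the induced subgraph of the zero forcing TAR graph of G_u on zero forcing sets of cardinality at most k is connected, then the induced subgraph of the zero forcing TAR graph of G on zero forcing sets of cardinality at most k+1 is connected. -/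
set_option linter.unusedSectionVars false
set_option maxHeartbeats 1000000

/-- The `k`-TAR graph: the induced subgraph of the TAR graph of `P` on the
`P`-sets of cardinality at most `k`. -/
def tarGraphLe {V : Type*} [DecidableEq V] (P : Finset V → Prop) (k : ℕ) :
    SimpleGraph {S : Finset V // P S ∧ S.card ≤ k} where
  Adj S T := (symmDiff S.1 T.1).card = 1
  symm := ⟨by intro S T h; rwa [symmDiff_comm]⟩
  loopless := ⟨by intro S h; simp [symmDiff_self] at h⟩

section TwinHelpers

variable {V : Type*} [Fintype V] [DecidableEq V] (G : SimpleGraph V) (u : V)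

lemma zfs_mono {S S' : Finset V} (h : S ⊆ S') (hS : IsZeroForcingSet G S) :
    IsZeroForcingSet G S' := fun B hB hcl => hS B (h.trans hB) hcl

lemma mem_image_involutive {σ : V → V} (hinv : Function.Involutive σ)
    (A : Finset V) (a : V) : a ∈ A.image σ ↔ σ a ∈ A := by
  simp only [Finset.mem_image]
  constructor
  · rintro ⟨b, hb, rfl⟩; rwa [hinv b]
  · intro h; exact ⟨σ a, h, hinv a⟩

lemma zfs_image_involutive {σ : V → V} (hinv : Function.Involutive σ)
    (hadj : ∀ x y, G.Adj (σ x) (σ y) ↔ G.Adj x y)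
    {S : Finset V} (hS : IsZeroForcingSet G S) :
    IsZeroForcingSet G (S.image σ) := by
  intro B hB hcl
  have hB' : S ⊆ B.image σ := by
    intro a ha
    rw [mem_image_involutive hinv]
    apply hB
    rw [mem_image_involutive hinv, hinv]
    exact ha
  have hcl' : ZFClosed G (B.image σ) := by
    rintro v hv ⟨w, ⟨hw1, hw2⟩, hw3⟩
    rw [mem_image_involutive hinv] at hv
    refine hcl (σ v) hv ⟨σ w, ⟨?_, ?_⟩, ?_⟩
    · rw [hadj]; exact hw1
    · intro hmem
      exact hw2 (by rw [mem_image_involutive hinv]; exact hmem)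
    · rintro x ⟨hx1, hx2⟩
      have h1 : G.Adj v (σ x) := by rw [← hadj, hinv]; exact hx1
      have h2 : σ x ∉ B.image σ := by
        rw [mem_image_involutive hinv, hinv]; exact hx2
      have := hw3 (σ x) ⟨h1, h2⟩
      rw [← this, hinv]
  have := hS _ hB' hcl'
  apply Finset.eq_univ_of_forall
  intro a
  have : σ a ∈ B.image σ := this ▸ Finset.mem_univ _
  rwa [mem_image_involutive hinv, hinv] at this

lemma swap_adj {u t : V} (h : ∀ a, G.Adj a u ↔ G.Adj a t) (x y : V) :
    G.Adj (Equiv.swap u t x) (Equiv.swap u t y) ↔ G.Adj x y := by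
  have h' : ∀ a, G.Adj u a ↔ G.Adj t a := by
    intro a; rw [G.adj_comm u a, G.adj_comm t a]; exact h a
  have key : ∀ a b, G.Adj a b → G.Adj (Equiv.swap u t a) (Equiv.swap u t b) := by
    intro a b hab
    rcases eq_or_ne u a with rfl | ha1
    · rcases eq_or_ne u b with rfl | hb1
      · simpa using hab
      · rcases eq_or_ne t b with rfl | hb2
        · rw [Equiv.swap_apply_left, Equiv.swap_apply_right]
          exact hab.symm
        · rw [Equiv.swap_apply_left, Equiv.swap_apply_of_ne_of_ne (Ne.symm hb1) (Ne.symm hb2)]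
          rwa [← h']
    · rcases eq_or_ne t a with rfl | ha2
      · rcases eq_or_ne u b with rfl | hb1
        · rw [Equiv.swap_apply_right, Equiv.swap_apply_left]
          exact hab.symm
        · rcases eq_or_ne t b with rfl | hb2
          · simpa using hab
          · rw [Equiv.swap_apply_right, Equiv.swap_apply_of_ne_of_ne (Ne.symm hb1) (Ne.symm hb2)]
            rwa [h']
      · rw [Equiv.swap_apply_of_ne_of_ne (Ne.symm ha1) (Ne.symm ha2)]
        rcases eq_or_ne u b with rfl | hb1
        · rw [Equiv.swap_apply_left]
          rwa [← h]
        · rcases eq_or_ne t b with rfl | hb2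
          · rw [Equiv.swap_apply_right]
            rwa [h]
          · rwa [Equiv.swap_apply_of_ne_of_ne (Ne.symm hb1) (Ne.symm hb2)]
  constructor
  · intro hx
    have := key _ _ hx
    simpa using this
  · exact key x y

lemma mem_image_val_subtype {p : V → Prop} [DecidablePred p] (s : Finset V) (a : V) :
    a ∈ (s.subtype p).image Subtype.val ↔ a ∈ s ∧ p a := by
  simp only [Finset.mem_image, Finset.mem_subtype]
  constructor
  · rintro ⟨⟨b, hb⟩, hmem, rfl⟩; exact ⟨hmem, hb⟩
  · rintro ⟨h1, h2⟩; exact ⟨⟨a, h2⟩, h1, rfl⟩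

/-- Claim A: lifting a ZFS of `G - u` by adding `u`. -/
lemma zfs_lift (A : Finset {v : V // v ≠ u})
    (hA : IsZeroForcingSet (G.comap (Subtype.val : {v : V // v ≠ u} → V)) A) :
    IsZeroForcingSet G (insert u (A.image Subtype.val)) := by
  intro B hB hcl
  have huB : u ∈ B := hB (Finset.mem_insert_self u _)
  set B' : Finset {v : V // v ≠ u} := B.subtype (· ≠ u) with hB'def
  have hAB' : A ⊆ B' := by
    intro a ha
    rw [hB'def, Finset.mem_subtype]
    exact hB (Finset.mem_insert_of_mem (Finset.mem_image_of_mem _ ha))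
  have hclB' : ZFClosed (G.comap (Subtype.val : {v : V // v ≠ u} → V)) B' := by
    rintro v hv ⟨w, ⟨hw1, hw2⟩, hw3⟩
    rw [hB'def, Finset.mem_subtype] at hv
    refine hcl v.1 hv ⟨w.1, ⟨hw1, ?_⟩, ?_⟩
    · intro hmem
      exact hw2 (by rw [hB'def, Finset.mem_subtype]; exact hmem)
    · rintro x ⟨hx1, hx2⟩
      have hxu : x ≠ u := fun h => hx2 (h ▸ huB)
      have := hw3 ⟨x, hxu⟩ ⟨hx1, fun hmem => hx2 (by rwa [hB'def, Finset.mem_subtype] at hmem)⟩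
      exact congrArg Subtype.val this
  have huniv := hA B' hAB' hclB'
  apply Finset.eq_univ_of_forall
  intro a
  rcases eq_or_ne a u with rfl | ha
  · exact huB
  · have : (⟨a, ha⟩ : {v : V // v ≠ u}) ∈ B' := huniv ▸ Finset.mem_univ _
    rwa [hB'def, Finset.mem_subtype] at this

/-- Claim B: removing `u` from a ZFS of `G` containing `u`, given a twin `t` of `u`
also inside `S`. -/
lemma zfs_drop {S : Finset V} (hS : IsZeroForcingSet G S) (huS : u ∈ S)
    {t : V} (ht : t ∈ S) (htu : t ≠ u) (htwin : ∀ a, G.Adj u a ↔ G.Adj t a) :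
    IsZeroForcingSet (G.comap (Subtype.val : {v : V // v ≠ u} → V)) (S.subtype (· ≠ u)) := by
  intro B' hSB' hclB'
  set B : Finset V := insert u (B'.image Subtype.val) with hBdef
  have huB : u ∈ B := Finset.mem_insert_self u _
  have hmemB : ∀ x : {v : V // v ≠ u}, x.1 ∈ B ↔ x ∈ B' := by
    intro x
    rw [hBdef, Finset.mem_insert]
    constructor
    · rintro (h | h)
      · exact absurd h x.2
      · rwa [Subtype.val_injective.mem_finset_image] at h
    · intro h; exact Or.inr (Finset.mem_image_of_mem _ h)
  have hSB : S ⊆ B := by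
    intro s hs
    rcases eq_or_ne s u with rfl | hsu
    · exact huB
    · exact (hmemB ⟨s, hsu⟩).mpr (hSB' (by rw [Finset.mem_subtype]; exact hs))
  have hclB : ZFClosed G B := by
    rintro v hv ⟨w, ⟨hw1, hw2⟩, hw3⟩
    have hwu : w ≠ u := fun h => hw2 (h ▸ huB)
    rcases eq_or_ne u v with rfl | hvu
    · have htB' : (⟨t, htu⟩ : {v : V // v ≠ u}) ∈ B' := by
        rw [← hmemB]
        exact hSB ht
      refine hclB' ⟨t, htu⟩ htB' ⟨⟨w, hwu⟩, ⟨?_, ?_⟩, ?_⟩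
      · show G.Adj t w
        rw [← htwin]; exact hw1
      · intro hmem; rw [← hmemB] at hmem; exact hw2 hmem
      · rintro x ⟨hx1, hx2⟩
        have hx1' : G.Adj u x.1 := by rw [htwin]; exact hx1
        have := hw3 x.1 ⟨hx1', fun hmem => hx2 ((hmemB x).mp hmem)⟩
        exact Subtype.ext this
    · have hvB' : (⟨v, hvu.symm⟩ : {v : V // v ≠ u}) ∈ B' := (hmemB _).mp hv
      refine hclB' ⟨v, hvu.symm⟩ hvB' ⟨⟨w, hwu⟩, ⟨hw1, ?_⟩, ?_⟩
      · intro hmem; rw [← hmemB] at hmem; exact hw2 hmem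
      · rintro x ⟨hx1, hx2⟩
        have := hw3 x.1 ⟨hx1, fun hmem => hx2 ((hmemB x).mp hmem)⟩
        exact Subtype.ext this
  have := hS B hSB hclB
  apply Finset.eq_univ_of_forall
  intro x
  rw [← hmemB x, this]
  exact Finset.mem_univ _

/-- A ZFS misses at most one vertex of a twin class. -/
lemma zfs_misses_at_most_one {S : Finset V} (hS : IsZeroForcingSet G S)
    {t1 t2 : V} (h12 : t1 ≠ t2) (htwin : ∀ a, G.Adj a t1 ↔ G.Adj a t2)
    (h1 : t1 ∉ S) (h2 : t2 ∉ S) : False := by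
  set B : Finset V := Finset.univ \ {t1, t2} with hBdef
  have hSB : S ⊆ B := by
    intro s hs
    rw [hBdef, Finset.mem_sdiff]
    refine ⟨Finset.mem_univ _, ?_⟩
    simp only [Finset.mem_insert, Finset.mem_singleton]
    rintro (rfl | rfl)
    · exact h1 hs
    · exact h2 hs
  have hclB : ZFClosed G B := by
    rintro v hv ⟨w, ⟨hw1, hw2⟩, hw3⟩
    have hwmem : w = t1 ∨ w = t2 := by
      by_contra hcon
      push_neg at hcon
      exact hw2 (by rw [hBdef, Finset.mem_sdiff]; simp [hcon.1, hcon.2])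
    have ht1B : t1 ∉ B := by rw [hBdef, Finset.mem_sdiff]; simp
    have ht2B : t2 ∉ B := by rw [hBdef, Finset.mem_sdiff]; simp
    rcases hwmem with rfl | rfl
    · have : G.Adj v t2 := (htwin v).mp hw1
      have := hw3 t2 ⟨this, ht2B⟩
      exact h12 this.symm
    · have : G.Adj v t1 := (htwin v).mpr hw1
      have := hw3 t1 ⟨this, ht1B⟩
      exact h12 this
  have := hS B hSB hclB
  have : t1 ∈ B := this ▸ Finset.mem_univ _
  rw [hBdef, Finset.mem_sdiff] at this
  simp at this

lemma symmDiff_erase_self_s18 {S : Finset V} {s : V} (hs : s ∈ S) :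
    symmDiff S (S.erase s) = {s} := by
  ext a
  simp only [Finset.mem_symmDiff, Finset.mem_erase, Finset.mem_singleton]
  constructor
  · rintro (⟨h1, h2⟩ | ⟨⟨h1, h2⟩, h3⟩)
    · by_contra hne; exact h2 ⟨hne, h1⟩
    · exact absurd h2 h3
  · rintro rfl
    exact Or.inl ⟨hs, fun h => h.1 rfl⟩

lemma symmDiff_insert_self {S : Finset V} {u : V} (hu : u ∉ S) :
    symmDiff S (insert u S) = {u} := by
  ext a
  simp only [Finset.mem_symmDiff, Finset.mem_insert, Finset.mem_singleton]
  constructor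
  · rintro (⟨h1, h2⟩ | ⟨h1, h2⟩)
    · exact absurd (Or.inr h1) h2
    · rcases h1 with rfl | h1
      · rfl
      · exact absurd h1 h2
  · rintro rfl
    exact Or.inr ⟨Or.inl rfl, hu⟩

lemma symmDiff_insert_insert {X Y : Finset V} {u : V} (hX : u ∉ X) (hY : u ∉ Y) :
    symmDiff (insert u X) (insert u Y) = symmDiff X Y := by
  ext a
  simp only [Finset.mem_symmDiff, Finset.mem_insert]
  rcases eq_or_ne a u with rfl | ha
  · simp [hX, hY]
  · simp [ha]

lemma symmDiff_image_val {u : V} (X Y : Finset {v : V // v ≠ u}) :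
    symmDiff (X.image Subtype.val) (Y.image Subtype.val)
      = (symmDiff X Y).image Subtype.val := by
  ext a
  simp only [Finset.mem_symmDiff, Finset.mem_image]
  constructor
  · rintro (⟨⟨x, hx, rfl⟩, h2⟩ | ⟨⟨x, hx, rfl⟩, h2⟩)
    · exact ⟨x, Or.inl ⟨hx, fun hy => h2 ⟨x, hy, rfl⟩⟩, rfl⟩
    · exact ⟨x, Or.inr ⟨hx, fun hy => h2 ⟨x, hy, rfl⟩⟩, rfl⟩
  · rintro ⟨x, (⟨h1, h2⟩ | ⟨h1, h2⟩), rfl⟩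
    · refine Or.inl ⟨⟨x, h1, rfl⟩, ?_⟩
      rintro ⟨y, hy, hyx⟩
      exact h2 (by rwa [Subtype.val_injective hyx] at hy)
    · refine Or.inr ⟨⟨x, h1, rfl⟩, ?_⟩
      rintro ⟨y, hy, hyx⟩
      exact h2 (by rwa [Subtype.val_injective hyx] at hy)

lemma exists_adj_of_reachable {α : Type*} (G : SimpleGraph α) {a b : α}
    (h : G.Reachable a b) (hne : a ≠ b) : ∃ c, G.Adj a c := by
  obtain ⟨p⟩ := h
  cases p with
  | nil => exact absurd rfl hne
  | cons h q => exact ⟨_, h⟩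

end TwinHelpers

/-- Let `G` contain a set `T` of pairwise twins with `|T| ≥ 3`, let `u ∈ T`, and let
`G_u` be the induced subgraph of `G` on `V \ {u}`. If the induced subgraph of the zero
forcing TAR graph of `G_u` on zero forcing sets of cardinality at most `k` is
connected, then the induced subgraph of the zero forcing TAR graph of `G` on zero
forcing sets of cardinality at most `k + 1` is connected. -/
theorem twin_deletion_tar_connected {V : Type*} [Fintype V] [DecidableEq V]
    (G : SimpleGraph V) (T : Finset V) (hT : 3 ≤ T.card)
    (htwin : ∀ v ∈ T, ∀ w ∈ T, v ≠ w → G.neighborSet v = G.neighborSet w)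
    (u : V) (hu : u ∈ T) (k : ℕ)
    (hconn : (tarGraphLe
        (IsZeroForcingSet (G.comap (Subtype.val : {v : V // v ≠ u} → V))) k).Connected) :
    (tarGraphLe (IsZeroForcingSet G) (k + 1)).Connected := by
  classical
  set H : SimpleGraph {v : V // v ≠ u} := G.comap (Subtype.val : {v : V // v ≠ u} → V)
    with hHdef
  set P : Finset V → Prop := IsZeroForcingSet G with hPdef
  set Q : Finset {v : V // v ≠ u} → Prop := IsZeroForcingSet H with hQdef
  -- twin adjacency facts
  have twinAdj : ∀ v ∈ T, ∀ w ∈ T, v ≠ w → ∀ a, G.Adj a v ↔ G.Adj a w := by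
    intro v hv w hw hne a
    have := Set.ext_iff.mp (htwin v hv w hw hne) a
    simp only [SimpleGraph.mem_neighborSet] at this
    rw [G.adj_comm a v, G.adj_comm a w]
    exact this
  have twinAdj' : ∀ v ∈ T, ∀ w ∈ T, v ≠ w → ∀ a, G.Adj v a ↔ G.Adj w a := by
    intro v hv w hw hne a
    rw [G.adj_comm v a, G.adj_comm w a]
    exact twinAdj v hv w hw hne a
  -- two distinct twins other than u
  have hTcard : 1 < (T.erase u).card := by
    have := Finset.card_erase_of_mem hu
    omega
  obtain ⟨t1, ht1, t2, ht2, h12⟩ := Finset.one_lt_card.mp hTcard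
  obtain ⟨ht1u, ht1T⟩ := Finset.mem_erase.mp ht1
  obtain ⟨ht2u, ht2T⟩ := Finset.mem_erase.mp ht2
  -- u ∉ image of val
  have hu_not_img : ∀ A : Finset {v : V // v ≠ u}, u ∉ A.image Subtype.val := by
    rintro A hA
    rw [Finset.mem_image] at hA
    obtain ⟨x, _, hx⟩ := hA
    exact x.2 hx
  -- the lift graph homomorphism
  have Fcard : ∀ A : {A : Finset {v : V // v ≠ u} // Q A ∧ A.card ≤ k},
      P (insert u (A.1.image Subtype.val)) ∧ (insert u (A.1.image Subtype.val)).card ≤ k + 1 := by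
    intro A
    constructor
    · exact zfs_lift G u A.1 A.2.1
    · calc (insert u (A.1.image Subtype.val)).card
          ≤ (A.1.image Subtype.val).card + 1 := Finset.card_insert_le _ _
        _ ≤ k + 1 := by
            rw [Finset.card_image_of_injective _ Subtype.val_injective]
            exact Nat.add_le_add_right A.2.2 1
  let Fhom : tarGraphLe Q k →g tarGraphLe P (k + 1) :=
    { toFun := fun A => ⟨insert u (A.1.image Subtype.val), Fcard A⟩
      map_rel' := by
        intro A B hAB
        show (symmDiff (insert u (A.1.image Subtype.val)) (insert u (B.1.image Subtype.val))).card = 1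
        rw [symmDiff_insert_insert (hu_not_img A.1) (hu_not_img B.1), symmDiff_image_val,
          Finset.card_image_of_injective _ Subtype.val_injective]
        exact hAB }
  -- case: u ∈ S : S is in the image of Fhom
  have case_mem : ∀ (S : Finset V) (hP : P S) (hc : S.card ≤ k + 1), u ∈ S →
      ∃ A : {A : Finset {v : V // v ≠ u} // Q A ∧ A.card ≤ k},
        (Fhom A : {S : Finset V // P S ∧ S.card ≤ k + 1}) = ⟨S, hP, hc⟩ := by
    intro S hP hc huS
    -- a twin of u inside S
    have htS : ∃ t, t ∈ S ∧ t ≠ u ∧ (∀ a, G.Adj u a ↔ G.Adj t a) := by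
      by_cases h1S : t1 ∈ S
      · exact ⟨t1, h1S, ht1u, twinAdj' u hu t1 ht1T (Ne.symm ht1u)⟩
      · by_cases h2S : t2 ∈ S
        · exact ⟨t2, h2S, ht2u, twinAdj' u hu t2 ht2T (Ne.symm ht2u)⟩
        · exact absurd (zfs_misses_at_most_one G hP h12
            (twinAdj t1 ht1T t2 ht2T h12) h1S h2S) id
    obtain ⟨t, htS, htu, htwin'⟩ := htS
    have hQ : Q (S.subtype (· ≠ u)) := zfs_drop G u hP huS htS htu htwin'
    have hcardA : (S.subtype (· ≠ u)).card ≤ k := by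
      rw [Finset.card_subtype]
      have : S.filter (· ≠ u) = S.erase u := Finset.filter_ne' S u
      rw [this, Finset.card_erase_of_mem huS]
      omega
    refine ⟨⟨S.subtype (· ≠ u), hQ, hcardA⟩, ?_⟩
    apply Subtype.ext
    show insert u ((S.subtype (· ≠ u)).image Subtype.val) = S
    ext a
    rw [Finset.mem_insert, mem_image_val_subtype]
    constructor
    · rintro (rfl | ⟨h, _⟩)
      · exact huS
      · exact h
    · intro ha
      rcases eq_or_ne a u with rfl | hne
      · exact Or.inl rfl
      · exact Or.inr ⟨ha, hne⟩
  -- every vertex reaches the image of Fhom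
  have key : ∀ S : {S : Finset V // P S ∧ S.card ≤ k + 1},
      ∃ A : {A : Finset {v : V // v ≠ u} // Q A ∧ A.card ≤ k},
        (tarGraphLe P (k + 1)).Reachable S (Fhom A) := by
    rintro ⟨S, hP, hc⟩
    by_cases huS : u ∈ S
    · obtain ⟨A, hA⟩ := case_mem S hP hc huS
      exact ⟨A, by rw [hA]⟩
    · -- u ∉ S
      -- helper: from a small ZFS not containing u, step to one containing u
      have step_small : ∀ (S' : Finset V) (hP' : P S') (hc' : S'.card ≤ k), u ∉ S' →
          ∃ A : {A : Finset {v : V // v ≠ u} // Q A ∧ A.card ≤ k},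
            (tarGraphLe P (k + 1)).Reachable ⟨S', hP', hc'.trans (Nat.le_succ k)⟩ (Fhom A) := by
        intro S' hP' hc' huS'
        have hPins : P (insert u S') := zfs_mono G (Finset.subset_insert u S') hP'
        have hcins : (insert u S').card ≤ k + 1 :=
          le_trans (Finset.card_insert_le _ _) (Nat.add_le_add_right hc' 1)
        obtain ⟨A, hA⟩ := case_mem (insert u S') hPins hcins (Finset.mem_insert_self u S')
        refine ⟨A, ?_⟩
        rw [hA]
        apply SimpleGraph.Adj.reachable
        show (symmDiff S' (insert u S')).card = 1
        rw [symmDiff_insert_self huS']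
        rfl
      by_cases hck : S.card ≤ k
      · exact step_small S hP hck huS
      · -- S.card = k + 1 and u ∉ S : find a removable vertex using connectivity of the small TAR graph
        have hcS : S.card = k + 1 := le_antisymm hc (by omega)
        -- both t1 t2 ∈ S
        have ht1S : t1 ∈ S := by
          by_contra h1S
          exact zfs_misses_at_most_one G hP (Ne.symm ht1u)
            (twinAdj u hu t1 ht1T (Ne.symm ht1u)) huS h1S
        have ht2S : t2 ∈ S := by
          by_contra h2S
          exact zfs_misses_at_most_one G hP (Ne.symm ht2u)
            (twinAdj u hu t2 ht2T (Ne.symm ht2u)) huS h2S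
        -- for a twin t ∈ S, the set S - t (as a subset of V - u) is a ZFS of G - u
        have At_zfs : ∀ t ∈ T, t ≠ u → t ∈ S → Q ((S.erase t).subtype (· ≠ u)) := by
          intro t htT htu htS
          set σ : V → V := ⇑(Equiv.swap u t) with hσdef
          have hinv : Function.Involutive σ := fun x => Equiv.swap_apply_self u t x
          have hadj : ∀ x y, G.Adj (σ x) (σ y) ↔ G.Adj x y :=
            swap_adj G (twinAdj u hu t htT (Ne.symm htu))
          have hPimg : P (S.image σ) := zfs_image_involutive G hinv hadj hP
          have huimg : u ∈ S.image σ := by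
            rw [mem_image_involutive hinv]
            show Equiv.swap u t u ∈ S
            rw [Equiv.swap_apply_left]
            exact htS
          -- a twin of u inside S.image σ : one of t1 t2 differs from t
          have htwin_img : ∃ t', t' ∈ S.image σ ∧ t' ≠ u ∧ t' ∈ T ∧ t' ≠ t := by
            rcases eq_or_ne t1 t with rfl | hne1
            · refine ⟨t2, ?_, ht2u, ht2T, Ne.symm h12⟩
              rw [mem_image_involutive hinv]
              show Equiv.swap u t1 t2 ∈ S
              rw [Equiv.swap_apply_of_ne_of_ne ht2u (Ne.symm h12)]
              exact ht2S
            · refine ⟨t1, ?_, ht1u, ht1T, hne1⟩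
              rw [mem_image_involutive hinv]
              show Equiv.swap u t t1 ∈ S
              rw [Equiv.swap_apply_of_ne_of_ne ht1u hne1]
              exact ht1S
          obtain ⟨t', ht'img, ht'u, ht'T, ht't⟩ := htwin_img
          have hQ' : Q ((S.image σ).subtype (· ≠ u)) :=
            zfs_drop G u hPimg huimg ht'img ht'u (twinAdj' u hu t' ht'T (Ne.symm ht'u))
          have heq : (S.image σ).subtype (· ≠ u) = (S.erase t).subtype (· ≠ u) := by
            ext x
            rw [Finset.mem_subtype, Finset.mem_subtype, mem_image_involutive hinv,
              Finset.mem_erase]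
            rcases eq_or_ne x.1 t with hxt | hxt
            · constructor
              · intro hmem
                exfalso
                rw [hσdef] at hmem
                rw [hxt, Equiv.swap_apply_right] at hmem
                exact huS hmem
              · rintro ⟨hne, _⟩
                exact absurd hxt hne
            · rw [hσdef, Equiv.swap_apply_of_ne_of_ne x.2 hxt]
              exact ⟨fun h => ⟨hxt, h⟩, fun h => h.2⟩
          rw [heq] at hQ'
          exact hQ'
        -- the two vertices of the small TAR graph
    -- cards
        have cardAt : ∀ t ∈ S, ((S.erase t).subtype (· ≠ u)).card = k := by
          intro t htS
          rw [Finset.card_subtype]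
          have : (S.erase t).filter (· ≠ u) = S.erase t := by
            apply Finset.filter_true_of_mem
            intro x hx
            intro hxu
            exact huS (hxu ▸ (Finset.mem_erase.mp hx).2)
          rw [this, Finset.card_erase_of_mem htS, hcS]
          omega
        have hQ1 : Q ((S.erase t1).subtype (· ≠ u)) := At_zfs t1 ht1T ht1u ht1S
        have hQ2 : Q ((S.erase t2).subtype (· ≠ u)) := At_zfs t2 ht2T ht2u ht2S
        set v1 : {A : Finset {v : V // v ≠ u} // Q A ∧ A.card ≤ k} :=
          ⟨(S.erase t1).subtype (· ≠ u), hQ1, (cardAt t1 ht1S).le⟩ with hv1def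
        set v2 : {A : Finset {v : V // v ≠ u} // Q A ∧ A.card ≤ k} :=
          ⟨(S.erase t2).subtype (· ≠ u), hQ2, (cardAt t2 ht2S).le⟩ with hv2def
        have hv12 : v1 ≠ v2 := by
          intro hcontra
          have : ((S.erase t1).subtype (· ≠ u) : Finset _) = (S.erase t2).subtype (· ≠ u) :=
            congrArg Subtype.val hcontra
          have h2mem : (⟨t2, ht2u⟩ : {v : V // v ≠ u}) ∈ (S.erase t1).subtype (· ≠ u) := by
            rw [Finset.mem_subtype]
            exact Finset.mem_erase.mpr ⟨Ne.symm h12, ht2S⟩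
          rw [this, Finset.mem_subtype] at h2mem
          exact (Finset.mem_erase.mp h2mem).1 rfl
        -- extract a neighbor of v1 in the small TAR graph
        obtain ⟨w0, hadj0⟩ := exists_adj_of_reachable _ (hconn.preconnected v1 v2) hv12
        · have hsym : (symmDiff ((S.erase t1).subtype (· ≠ u)) w0.1).card = 1 := hadj0
          obtain ⟨x, hx⟩ := Finset.card_eq_one.mp hsym
          have hxmem := hx ▸ Finset.mem_singleton_self x
          rw [Finset.mem_symmDiff] at hxmem
          have hother : ∀ y, y ≠ x →
              (y ∈ (S.erase t1).subtype (· ≠ u) ↔ y ∈ w0.1) := by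
            intro y hy
            constructor
            · intro hmem
              by_contra hnmem
              have : y ∈ symmDiff ((S.erase t1).subtype (· ≠ u)) w0.1 :=
                Finset.mem_symmDiff.mpr (Or.inl ⟨hmem, hnmem⟩)
              rw [hx, Finset.mem_singleton] at this
              exact hy this
            · intro hmem
              by_contra hnmem
              have : y ∈ symmDiff ((S.erase t1).subtype (· ≠ u)) w0.1 :=
                Finset.mem_symmDiff.mpr (Or.inr ⟨hmem, hnmem⟩)
              rw [hx, Finset.mem_singleton] at this
              exact hy this
          have hxA : x ∈ (S.erase t1).subtype (· ≠ u) ∧ x ∉ w0.1 := by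
            rcases hxmem with h | ⟨hxw, hxA⟩
            · exact h
            · exfalso
              -- w0 would have k+1 elements
              have hsub : insert x ((S.erase t1).subtype (· ≠ u)) ⊆ w0.1 := by
                intro y hy
                rw [Finset.mem_insert] at hy
                rcases hy with rfl | hy
                · exact hxw
                · rcases eq_or_ne y x with rfl | hyx
                  · exact hxw
                  · exact (hother y hyx).mp hy
              have : k + 1 ≤ w0.1.card := by
                calc k + 1 = ((S.erase t1).subtype (· ≠ u)).card + 1 := by
                      rw [cardAt t1 ht1S]
                  _ = (insert x ((S.erase t1).subtype (· ≠ u))).card := by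
                      rw [Finset.card_insert_of_notMem hxA]
                  _ ≤ w0.1.card := Finset.card_le_card hsub
              have hw0k := w0.2.2
              omega
          obtain ⟨hxA1, hxw⟩ := hxA
          -- w0.1 = At1.erase x
          have hw0eq : w0.1 = ((S.erase t1).subtype (· ≠ u)).erase x := by
            ext y
            rw [Finset.mem_erase]
            constructor
            · intro hy
              have hyx : y ≠ x := fun h => hxw (h ▸ hy)
              exact ⟨hyx, (hother y hyx).mpr hy⟩
            · rintro ⟨hyx, hy⟩
              exact (hother y hyx).mp hy
          -- the removable vertex
          set s : V := x.1 with hsdef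
          have hsS1 : s ∈ S.erase t1 := by
            have := Finset.mem_subtype.mp hxA1
            exact this
          have hst1 : s ≠ t1 := (Finset.mem_erase.mp hsS1).1
          have hsS : s ∈ S := (Finset.mem_erase.mp hsS1).2
          have hsu : s ≠ u := x.2
          -- P (insert u (w0.1.image val))
          have hPlift : P (insert u (w0.1.image Subtype.val)) := zfs_lift G u w0.1 w0.2.1
          -- compute C := w0.1.image val = (S.erase t1).erase s
          have hC : w0.1.image Subtype.val = (S.erase t1).erase s := by
            rw [hw0eq]
            ext a
            rw [Finset.mem_image, Finset.mem_erase]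
            constructor
            · rintro ⟨y, hy, rfl⟩
              rw [Finset.mem_erase, Finset.mem_subtype] at hy
              exact ⟨fun h => hy.1 (Subtype.ext h), hy.2⟩
            · rintro ⟨has, haS1⟩
              have hau : a ≠ u := fun h => huS (h ▸ (Finset.mem_erase.mp haS1).2)
              refine ⟨⟨a, hau⟩, ?_, rfl⟩
              rw [Finset.mem_erase, Finset.mem_subtype]
              exact ⟨fun h => has (congrArg Subtype.val h), haS1⟩
          -- now apply the swap u t1
          set σ : V → V := ⇑(Equiv.swap u t1) with hσdef
          have hinv : Function.Involutive σ := fun z => Equiv.swap_apply_self u t1 z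
          have hadjσ : ∀ a b, G.Adj (σ a) (σ b) ↔ G.Adj a b :=
            swap_adj G (twinAdj u hu t1 ht1T (Ne.symm ht1u))
          have hPswap : P ((insert u (w0.1.image Subtype.val)).image σ) :=
            zfs_image_involutive G hinv hadjσ hPlift
          have himg_eq : (insert u (w0.1.image Subtype.val)).image σ = S.erase s := by
            rw [hC]
            apply Finset.Subset.antisymm
            · intro a ha
              rw [Finset.mem_image] at ha
              obtain ⟨b, hb, rfl⟩ := ha
              rw [Finset.mem_insert] at hb
              rcases hb with rfl | hb
              · rw [hσdef, Equiv.swap_apply_left]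
                exact Finset.mem_erase.mpr ⟨Ne.symm hst1, ht1S⟩
              · rw [Finset.mem_erase, Finset.mem_erase] at hb
                obtain ⟨hbs, hbt1, hbS⟩ := hb
                have hbu : b ≠ u := fun h => huS (h ▸ hbS)
                rw [hσdef, Equiv.swap_apply_of_ne_of_ne hbu hbt1]
                exact Finset.mem_erase.mpr ⟨hbs, hbS⟩
            · intro a ha
              rw [Finset.mem_erase] at ha
              obtain ⟨has, haS⟩ := ha
              rw [mem_image_involutive hinv, Finset.mem_insert]
              rcases eq_or_ne a t1 with rfl | hat1
              · left
                rw [hσdef, Equiv.swap_apply_right]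
              · right
                have hau : a ≠ u := fun h => huS (h ▸ haS)
                rw [hσdef, Equiv.swap_apply_of_ne_of_ne hau hat1]
                exact Finset.mem_erase.mpr ⟨has, Finset.mem_erase.mpr ⟨hat1, haS⟩⟩
          rw [himg_eq] at hPswap
          -- now build the path S → S.erase s → ... → image of Fhom
          have hcerase : (S.erase s).card ≤ k := by
            rw [Finset.card_erase_of_mem hsS, hcS]
            omega
          have huerase : u ∉ S.erase s := fun h => huS (Finset.mem_erase.mp h).2
          obtain ⟨A, hreach⟩ := step_small (S.erase s) hPswap hcerase huerase
          refine ⟨A, ?_⟩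
          refine SimpleGraph.Reachable.trans ?_ hreach
          apply SimpleGraph.Adj.reachable
          show (symmDiff S (S.erase s)).card = 1
          rw [symmDiff_erase_self_s18 hsS]
          rfl
  -- assemble connectivity
  rw [SimpleGraph.connected_iff]
  constructor
  · intro S1 S2
    obtain ⟨A1, r1⟩ := key S1
    obtain ⟨A2, r2⟩ := key S2
    have rmid : (tarGraphLe P (k + 1)).Reachable (Fhom A1) (Fhom A2) :=
      (hconn.preconnected A1 A2).map Fhom
    exact r1.trans (rmid.trans r2.symm)
  · obtain ⟨A⟩ := hconn.nonempty
    exact ⟨Fhom A⟩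
end
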